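/- arXiv:1707.00165 — 4 statements merged into one kernel-verified Lean document; each statement's English description precedes it below -/
import Mathlib

section
/- There exists a constant C > 0 such that for all n ≥ 2 and all 1 ≤ k ≤ n, in the random permutation model on {1,…,n}: |Var(W_k(n)) − k²·log(k(n−k+1)) − n²/2| ≤ C·k·n, where log is the natural logarithm. -/
open Finset Filter Topology MeasureTheory

/-- `eventA σ j k`: in the random binary search tree built by inserting the keys
`(σ 0 : ℕ) + 1, (σ 1 : ℕ) + 1, …` (so that the keys are `{1, …, n}` and `σ` is the
insertion order), the node labelled `k` lies in the subtree rooted at the node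
labelled `j`; equivalently (for `j ≠ k`), `j` occurs before all other elements of
`{min j k, …, max j k}` in the insertion order.  For `j = k` this is the sure event. -/
def eventA {n : ℕ} (σ : Equiv.Perm (Fin n)) (j k : ℕ) : Prop :=
  ∀ jf mf : Fin n, (jf : ℕ) + 1 = j →
    min j k ≤ (mf : ℕ) + 1 → (mf : ℕ) + 1 ≤ max j k → (mf : ℕ) + 1 ≠ j →
      σ.symm jf < σ.symm mf

/-- `eventB σ j k`: the event `B_{j,k}`, i.e. `A_{j,k-1}` for `j < k`,
`A_{j,k+1}` for `j > k`, and the sure event for `j = k`. -/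
def eventB {n : ℕ} (σ : Equiv.Perm (Fin n)) (j k : ℕ) : Prop :=
  if j < k then eventA σ j (k - 1) else if k < j then eventA σ j (k + 1) else True

open Classical in
/-- probability of an event under the uniform distribution on permutations. -/
noncomputable def probPerm {n : ℕ} (E : Equiv.Perm (Fin n) → Prop) : ℝ :=
  ((Finset.univ.filter fun σ => E σ).card : ℝ) / (Fintype.card (Equiv.Perm (Fin n)) : ℝ)

/-- expectation of a random variable under the uniform distribution on permutations. -/
noncomputable def expPerm {n : ℕ} (X : Equiv.Perm (Fin n) → ℝ) : ℝ :=
  (∑ σ : Equiv.Perm (Fin n), X σ) / (Fintype.card (Equiv.Perm (Fin n)) : ℝ)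

/-- variance of a random variable under the uniform distribution on permutations. -/
noncomputable def varPerm {n : ℕ} (X : Equiv.Perm (Fin n) → ℝ) : ℝ :=
  expPerm fun σ => (X σ - expPerm X) ^ 2

open Classical in
/-- real-valued indicator of a proposition. -/
noncomputable def ind (P : Prop) : ℝ := if P then 1 else 0

/-- `depthD σ k = D_k(n)`, the depth of the node labelled `k`. -/
noncomputable def depthD {n : ℕ} (σ : Equiv.Perm (Fin n)) (k : ℕ) : ℝ :=
  (∑ j : Fin n, ind (eventA σ ((j : ℕ) + 1) k)) - 1

/-- `weightW σ k = W_k(n)`, the weighted depth of the node labelled `k`. -/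
noncomputable def weightW {n : ℕ} (σ : Equiv.Perm (Fin n)) (k : ℕ) : ℝ :=
  ∑ j : Fin n, ((j : ℕ) + 1 : ℝ) * ind (eventA σ ((j : ℕ) + 1) k)

/-- `barW σ k = \bar W_k(n) = Σ_{j=1}^n j · 1_{B_{j,k}}`. -/
noncomputable def barW {n : ℕ} (σ : Equiv.Perm (Fin n)) (k : ℕ) : ℝ :=
  ∑ j : Fin n, ((j : ℕ) + 1 : ℝ) * ind (eventB σ ((j : ℕ) + 1) k)

/-- first-order harmonic number `H^{(1)}_m = Σ_{j=1}^m 1/j`. -/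
noncomputable def H1 (m : ℕ) : ℝ := ∑ j ∈ Finset.range m, (1 : ℝ) / (j + 1)

/-- second-order harmonic number `H^{(2)}_m = Σ_{j=1}^m 1/j²`. -/
noncomputable def H2 (m : ℕ) : ℝ := ∑ j ∈ Finset.range m, (1 : ℝ) / (j + 1) ^ 2

open Finset Equiv

section Counting
open scoped Classical
variable {n : ℕ}

/-- `x` comes first among `S` in the order `σ.symm`. -/
def isFirst (σ : Perm (Fin n)) (x : Fin n) (S : Finset (Fin n)) : Prop :=
  ∀ w ∈ S, w ≠ x → σ.symm x < σ.symm w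

lemma isFirst_unique {σ : Perm (Fin n)} {x y : Fin n} {S : Finset (Fin n)}
    (hx : x ∈ S) (hy : y ∈ S) (h1 : isFirst σ x S) (h2 : isFirst σ y S) : x = y := by
  by_contra h
  exact lt_asymm (h1 y hy (Ne.symm h)) (h2 x hx h)

/-- the first element of a nonempty `S` under `σ.symm`. -/
noncomputable def firstIdx (σ : Perm (Fin n)) (S : Finset (Fin n)) (hS : S.Nonempty) : Fin n :=
  σ ((S.image σ.symm).min' (hS.image _))

lemma firstIdx_mem (σ : Perm (Fin n)) (S : Finset (Fin n)) (hS : S.Nonempty) :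
    firstIdx σ S hS ∈ S := by
  have h := (S.image σ.symm).min'_mem (hS.image _)
  rw [Finset.mem_image] at h
  obtain ⟨a, ha, h⟩ := h
  rw [firstIdx, ← h]
  simpa using ha

lemma firstIdx_isFirst (σ : Perm (Fin n)) (S : Finset (Fin n)) (hS : S.Nonempty) :
    isFirst σ (firstIdx σ S hS) S := by
  intro w hw hne
  have h1 : σ.symm (firstIdx σ S hS) = (S.image σ.symm).min' (hS.image _) := by
    simp [firstIdx]
  have h2 : σ.symm (firstIdx σ S hS) ≤ σ.symm w := by
    rw [h1]; exact Finset.min'_le _ _ (Finset.mem_image_of_mem _ hw)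
  rcases lt_or_eq_of_le h2 with h | h
  · exact h
  · exact absurd (σ.symm.injective h).symm hne

lemma isFirst_iff_firstIdx {σ : Perm (Fin n)} {x : Fin n} {S : Finset (Fin n)}
    (hx : x ∈ S) : isFirst σ x S ↔ firstIdx σ S ⟨x, hx⟩ = x := by
  constructor
  · intro h
    exact isFirst_unique (firstIdx_mem σ S ⟨x, hx⟩) hx (firstIdx_isFirst σ S ⟨x, hx⟩) h
  · intro h
    rw [← h]; exact firstIdx_isFirst σ S ⟨x, hx⟩

lemma symm_swap_mul (y z : Fin n) (σ : Perm (Fin n)) (w : Fin n) :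
    (Equiv.swap y z * σ).symm w = σ.symm (Equiv.swap y z w) := by
  simp [Equiv.Perm.mul_def, Equiv.symm_trans_apply]

/-- moving the first element by a swap -/
lemma isFirst_swap_move {S : Finset (Fin n)} {x x' : Fin n}
    (hx : x ∈ S) (hx' : x' ∈ S) (σ : Perm (Fin n)) (h : isFirst σ x' S) :
    isFirst (Equiv.swap x x' * σ) x S := by
  intro w hw hne
  rw [symm_swap_mul, symm_swap_mul, Equiv.swap_apply_left]
  have hwS : Equiv.swap x x' w ∈ S := by
    by_cases h1 : w = x
    · simpa [h1, Equiv.swap_apply_left] using hx'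
    · by_cases h2 : w = x'
      · simpa [h2, Equiv.swap_apply_right] using hx
      · rw [Equiv.swap_apply_of_ne_of_ne h1 h2]; exact hw
  have hwne : Equiv.swap x x' w ≠ x' := by
    intro hc
    have h3 : w = x := (Equiv.swap x x').injective (by rw [hc, Equiv.swap_apply_left])
    exact hne h3
  exact h _ hwS hwne

/-- invariance of `isFirst σ x S` under swapping two elements of `S` other than `x`. -/
lemma isFirst_swap_inv {S : Finset (Fin n)} {x y z : Fin n}
    (hy : y ∈ S) (hz : z ∈ S) (hyx : y ≠ x) (hzx : z ≠ x) (σ : Perm (Fin n))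
    (h : isFirst σ x S) : isFirst (Equiv.swap y z * σ) x S := by
  intro w hw hne
  rw [symm_swap_mul, symm_swap_mul, Equiv.swap_apply_of_ne_of_ne (Ne.symm hyx) (Ne.symm hzx)]
  have hwS : Equiv.swap y z w ∈ S := by
    by_cases h1 : w = y
    · simpa [h1, Equiv.swap_apply_left] using hz
    · by_cases h2 : w = z
      · simpa [h2, Equiv.swap_apply_right] using hy
      · rw [Equiv.swap_apply_of_ne_of_ne h1 h2]; exact hw
  have hwne : Equiv.swap y z w ≠ x := by
    by_cases h1 : w = y
    · simpa [h1, Equiv.swap_apply_left] using hzx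
    · by_cases h2 : w = z
      · simpa [h2, Equiv.swap_apply_right] using hyx
      · rwa [Equiv.swap_apply_of_ne_of_ne h1 h2]
  exact h _ hwS hwne

/-- Core counting lemma: if `Q` is invariant under left multiplication by swaps of
elements of `S`, then the event `Q ∧ isFirst x S` has `1/|S|` of the permutations in `Q`. -/
lemma core_count (S : Finset (Fin n)) (Q : Perm (Fin n) → Prop)
    (hQ : ∀ y ∈ S, ∀ z ∈ S, ∀ σ, Q σ → Q (Equiv.swap y z * σ))
    (x : Fin n) (hx : x ∈ S) :
    S.card * (univ.filter fun σ => Q σ ∧ isFirst σ x S).card = (univ.filter Q).card := by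
  have hS : S.Nonempty := ⟨x, hx⟩
  -- fiberwise count over the first element
  have h1 : (univ.filter Q).card
      = ∑ x' ∈ S, ((univ.filter Q).filter fun σ => firstIdx σ S hS = x').card :=
    Finset.card_eq_sum_card_fiberwise (fun σ _ => firstIdx_mem σ S hS)
  -- each fiber has the same cardinality as the fiber of x
  have h2 : ∀ x' ∈ S, ((univ.filter Q).filter fun σ => firstIdx σ S hS = x').card
      = ((univ.filter Q).filter fun σ => firstIdx σ S hS = x).card := by
    intro x' hx'
    apply Finset.card_bij (fun σ _ => Equiv.swap x x' * σ)
    · intro σ hσ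
      simp only [Finset.mem_filter, Finset.mem_univ, true_and] at hσ ⊢
      obtain ⟨hQσ, hfi⟩ := hσ
      refine ⟨hQ x hx x' hx' σ hQσ, ?_⟩
      rw [← isFirst_iff_firstIdx hx]
      · apply isFirst_swap_move hx hx'
        rw [isFirst_iff_firstIdx hx']
        exact hfi
    · intro σ1 h1 σ2 h2 h
      exact mul_left_cancel h
    · intro σ hσ
      refine ⟨Equiv.swap x x' * σ, ?_, ?_⟩
      · simp only [Finset.mem_filter, Finset.mem_univ, true_and] at hσ ⊢
        obtain ⟨hQσ, hfi⟩ := hσ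
        refine ⟨hQ x hx x' hx' σ hQσ, ?_⟩
        rw [← isFirst_iff_firstIdx hx']
        · rw [Equiv.swap_comm]
          apply isFirst_swap_move hx' hx
          rw [isFirst_iff_firstIdx hx]
          exact hfi
      · rw [← mul_assoc, Equiv.swap_mul_self, one_mul]
  have h3 : ∀ x' ∈ S, ((univ.filter Q).filter fun σ => firstIdx σ S hS = x')
      = univ.filter fun σ => Q σ ∧ isFirst σ x' S := by
    intro x' hx'
    rw [Finset.filter_filter]
    apply Finset.filter_congr
    intro σ _
    constructor
    · rintro ⟨hq, hf⟩
      exact ⟨hq, by rw [isFirst_iff_firstIdx hx']; exact hf⟩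
    · rintro ⟨hq, hf⟩
      exact ⟨hq, by rwa [isFirst_iff_firstIdx hx'] at hf⟩
  rw [h1, Finset.sum_congr rfl h2, Finset.sum_const, smul_eq_mul]
  congr 1
  rw [h3 x hx]

lemma filter_card_congr {p q : Perm (Fin n) → Prop} (h : ∀ a, p a ↔ q a) :
    (univ.filter fun σ => p σ).card = (univ.filter fun σ => q σ).card := by
  congr 1
  ext a
  simp only [Finset.mem_filter]
  exact and_congr_right fun _ => h a

lemma probPerm_congr {E E' : Perm (Fin n) → Prop} (h : ∀ σ, E σ ↔ E' σ) :
    probPerm E = probPerm E' := by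
  simp only [probPerm]
  congr 1
  exact_mod_cast filter_card_congr h

lemma probPerm_eq_card {E : Perm (Fin n) → Prop} [DecidablePred E] :
    probPerm E = ((univ.filter fun σ => E σ).card : ℝ)
      / (Fintype.card (Perm (Fin n)) : ℝ) := by
  unfold probPerm
  rw [Finset.filter_congr_decidable]

lemma cardPerm_pos : 0 < (Fintype.card (Perm (Fin n)) : ℝ) := by
  exact_mod_cast Fintype.card_pos

lemma probPerm_true : probPerm (fun _ : Perm (Fin n) => True) = 1 := by
  rw [probPerm_eq_card]
  rw [Finset.filter_true_of_mem (fun _ _ => trivial), Finset.card_univ,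
    div_self (ne_of_gt cardPerm_pos)]

lemma probPerm_or_disjoint {P Q : Perm (Fin n) → Prop} (h : ∀ σ, ¬(P σ ∧ Q σ)) :
    probPerm (fun σ => P σ ∨ Q σ) = probPerm P + probPerm Q := by
  rw [probPerm_eq_card, probPerm_eq_card, probPerm_eq_card]
  rw [← add_div]
  congr 1
  rw [← Nat.cast_add]
  congr 1
  have hsub : (univ.filter fun σ => P σ ∨ Q σ)
      = (univ.filter fun σ => P σ) ∪ (univ.filter fun σ => Q σ) := by
    ext σ; simp [Finset.mem_filter, Finset.mem_union]
  rw [hsub]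
  apply Finset.card_union_of_disjoint
  rw [Finset.disjoint_filter]
  intro σ _ hP hQ
  exact h σ ⟨hP, hQ⟩

/-- real version of the core counting lemma. -/
lemma prob_core (S : Finset (Fin n)) (Q : Perm (Fin n) → Prop)
    (hQ : ∀ y ∈ S, ∀ z ∈ S, ∀ σ, Q σ → Q (Equiv.swap y z * σ))
    (x : Fin n) (hx : x ∈ S) :
    probPerm (fun σ => Q σ ∧ isFirst σ x S) = probPerm Q / S.card := by
  have h := core_count S Q hQ x hx
  have hS : (0:ℝ) < S.card := by exact_mod_cast Finset.card_pos.mpr ⟨x, hx⟩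
  have hN := cardPerm_pos (n := n)
  have hcast : (S.card : ℝ) * ((univ.filter fun σ => Q σ ∧ isFirst σ x S).card : ℝ)
      = ((univ.filter fun σ => Q σ).card : ℝ) := by exact_mod_cast h
  rw [probPerm_eq_card, probPerm_eq_card]
  rw [div_div, div_eq_div_iff (ne_of_gt hN) (by positivity)]
  linear_combination (↑(Fintype.card (Perm (Fin n))) : ℝ) * hcast

lemma prob_isFirst {S : Finset (Fin n)} {x : Fin n} (hx : x ∈ S) :
    probPerm (fun σ => isFirst σ x S) = 1 / S.card := by
  have h := prob_core S (fun _ => True) (fun _ _ _ _ _ _ => trivial) x hx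
  rw [probPerm_true] at h
  rw [← h]
  exact probPerm_congr (fun σ => by simp)

lemma prob_isFirst_nested {S T : Finset (Fin n)} {x y : Fin n}
    (hTS : T ⊆ S) (hx : x ∈ S) (hxT : x ∉ T) (hy : y ∈ T) :
    probPerm (fun σ => isFirst σ x S ∧ isFirst σ y T)
      = 1 / (S.card * T.card) := by
  have hQ : ∀ a ∈ T, ∀ b ∈ T, ∀ σ : Perm (Fin n), isFirst σ x S →
      isFirst (Equiv.swap a b * σ) x S := by
    intro a ha b hb σ hσ
    exact isFirst_swap_inv (hTS ha) (hTS hb)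
      (fun h => hxT (by rw [← h]; exact ha)) (fun h => hxT (by rw [← h]; exact hb)) σ hσ
  have h := prob_core T (fun σ => isFirst σ x S) hQ y hy
  rw [prob_isFirst hx] at h
  rw [h]; ring

lemma isFirst_mono {S S' : Finset (Fin n)} {x : Fin n} (hS : S ⊆ S') {σ : Perm (Fin n)}
    (h : isFirst σ x S') : isFirst σ x S :=
  fun w hw hne => h w (hS hw) hne

lemma overlap_decomp {S T : Finset (Fin n)} {x y : Fin n}
    (hx : x ∈ S) (hxT : x ∉ T) (hy : y ∈ T) (hyS : y ∉ S) (σ : Perm (Fin n)) :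
    (isFirst σ x S ∧ isFirst σ y T)
      ↔ ((isFirst σ x (S ∪ T) ∧ isFirst σ y T) ∨ (isFirst σ y (S ∪ T) ∧ isFirst σ x S)) := by
  constructor
  · rintro ⟨h1, h2⟩
    have hxU : x ∈ S ∪ T := Finset.mem_union_left _ hx
    set u := firstIdx σ (S ∪ T) ⟨x, hxU⟩ with hu
    have humem := firstIdx_mem σ (S ∪ T) ⟨x, hxU⟩
    have hufirst := firstIdx_isFirst σ (S ∪ T) ⟨x, hxU⟩
    rcases Finset.mem_union.mp humem with hu1 | hu1
    · left
      have : u = x := isFirst_unique hu1 hx (isFirst_mono Finset.subset_union_left hufirst) h1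
      exact ⟨this ▸ hufirst, h2⟩
    · right
      have : u = y := isFirst_unique hu1 hy (isFirst_mono Finset.subset_union_right hufirst) h2
      exact ⟨this ▸ hufirst, h1⟩
  · rintro (⟨h1, h2⟩ | ⟨h1, h2⟩)
    · exact ⟨isFirst_mono Finset.subset_union_left h1, h2⟩
    · exact ⟨h2, isFirst_mono Finset.subset_union_right h1⟩

lemma prob_isFirst_overlap {S T : Finset (Fin n)} {x y : Fin n}
    (hx : x ∈ S) (hxT : x ∉ T) (hy : y ∈ T) (hyS : y ∉ S) :
    probPerm (fun σ => isFirst σ x S ∧ isFirst σ y T)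
      = 1 / ((S ∪ T).card * T.card) + 1 / ((S ∪ T).card * S.card) := by
  have hxU : x ∈ S ∪ T := Finset.mem_union_left _ hx
  have hyU : y ∈ S ∪ T := Finset.mem_union_right _ hy
  have hxy : x ≠ y := fun h => hxT (h ▸ hy)
  rw [probPerm_congr (overlap_decomp hx hxT hy hyS)]
  rw [probPerm_or_disjoint]
  · congr 1
    · -- first piece
      have hQ : ∀ a ∈ T, ∀ b ∈ T, ∀ σ : Perm (Fin n), isFirst σ x (S ∪ T) →
          isFirst (Equiv.swap a b * σ) x (S ∪ T) := fun a ha b hb σ hσ =>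
        isFirst_swap_inv (Finset.mem_union_right _ ha) (Finset.mem_union_right _ hb)
          (fun h => hxT (by rw [← h]; exact ha)) (fun h => hxT (by rw [← h]; exact hb)) σ hσ
      have h := prob_core T (fun σ => isFirst σ x (S ∪ T)) hQ y hy
      rw [prob_isFirst hxU] at h
      rw [h]; ring
    · have hQ : ∀ a ∈ S, ∀ b ∈ S, ∀ σ : Perm (Fin n), isFirst σ y (S ∪ T) →
          isFirst (Equiv.swap a b * σ) y (S ∪ T) := fun a ha b hb σ hσ =>
        isFirst_swap_inv (Finset.mem_union_left _ ha) (Finset.mem_union_left _ hb)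
          (fun h => hyS (by rw [← h]; exact ha)) (fun h => hyS (by rw [← h]; exact hb)) σ hσ
      have h := prob_core S (fun σ => isFirst σ y (S ∪ T)) hQ x hx
      rw [prob_isFirst hyU] at h
      rw [h]; ring
  · rintro σ ⟨⟨h1, -⟩, ⟨h2, -⟩⟩
    exact hxy (isFirst_unique hxU hyU h1 h2)

end Counting

section EventA
open scoped Classical
variable {n : ℕ}

/-- the interval of `Fin n` indices with labels between `min j k` and `max j k`. -/
def iSet (n j k : ℕ) : Finset (Fin n) :=
  univ.filter fun m => min j k ≤ (m : ℕ) + 1 ∧ (m : ℕ) + 1 ≤ max j k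

lemma mem_iSet_iff {j k : ℕ} {m : Fin n} :
    m ∈ iSet n j k ↔ (min j k ≤ (m : ℕ) + 1 ∧ (m : ℕ) + 1 ≤ max j k) := by
  simp [iSet]

lemma eventA_iff_isFirst {j k : ℕ} (x : Fin n) (hx : (x : ℕ) + 1 = j) (σ : Equiv.Perm (Fin n)) :
    eventA σ j k ↔ isFirst σ x (iSet n j k) := by
  constructor
  · intro h w hw hne
    rw [mem_iSet_iff] at hw
    refine h x w hx hw.1 hw.2 ?_
    intro hc
    exact hne (Fin.ext (by omega))
  · intro h jf mf hjf h1 h2 h3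
    have hjx : jf = x := Fin.ext (by omega)
    rw [hjx]
    refine h mf (mem_iSet_iff.mpr ⟨h1, h2⟩) ?_
    intro hc
    rw [hc] at h3
    exact h3 hx

lemma card_filter_interval {a b : ℕ} (h1 : 1 ≤ a) (hab : a ≤ b) (h2 : b ≤ n) :
    (univ.filter fun m : Fin n => a ≤ (m : ℕ) + 1 ∧ (m : ℕ) + 1 ≤ b).card = b - a + 1 := by
  have hlt : ∀ m ∈ Finset.Icc (a-1) (b-1), m < n := fun m hm => by
    rw [Finset.mem_Icc] at hm; omega
  have he : (univ.filter fun m : Fin n => a ≤ (m : ℕ) + 1 ∧ (m : ℕ) + 1 ≤ b)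
      = (Finset.Icc (a-1) (b-1)).attachFin hlt := by
    ext m
    simp only [Finset.mem_filter, Finset.mem_univ, true_and, Finset.mem_attachFin,
      Finset.mem_Icc]
    omega
  rw [he, Finset.card_attachFin, Nat.card_Icc]
  omega

lemma iSet_card {j k : ℕ} (h1 : 1 ≤ min j k) (h2 : max j k ≤ n) :
    (iSet n j k).card = max j k - min j k + 1 :=
  card_filter_interval h1 (min_le_max) h2

lemma prob_eventA {j k : ℕ} (hj1 : 1 ≤ j) (hjn : j ≤ n) (hk1 : 1 ≤ k) (hkn : k ≤ n) :
    probPerm (fun σ : Equiv.Perm (Fin n) => eventA σ j k)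
      = 1 / ((max j k - min j k + 1 : ℕ) : ℝ) := by
  obtain ⟨x, hx⟩ : ∃ x : Fin n, (x : ℕ) + 1 = j := ⟨⟨j - 1, by omega⟩, by simp; omega⟩
  have hmem : x ∈ iSet n j k := by rw [mem_iSet_iff]; omega
  rw [probPerm_congr (fun σ => eventA_iff_isFirst x hx σ), prob_isFirst hmem,
    iSet_card (by omega) (by omega)]

lemma prob_eventA_pair_left {l l' k : ℕ} (h1 : 1 ≤ l) (h2 : l < l') (h3 : l' < k) (hkn : k ≤ n) :
    probPerm (fun σ : Equiv.Perm (Fin n) => eventA σ l k ∧ eventA σ l' k)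
      = 1 / (((k - l + 1 : ℕ) : ℝ) * ((k - l' + 1 : ℕ) : ℝ)) := by
  obtain ⟨x, hx⟩ : ∃ x : Fin n, (x : ℕ) + 1 = l := ⟨⟨l - 1, by omega⟩, by simp; omega⟩
  obtain ⟨y, hy⟩ : ∃ y : Fin n, (y : ℕ) + 1 = l' := ⟨⟨l' - 1, by omega⟩, by simp; omega⟩
  have hcongr : ∀ σ : Equiv.Perm (Fin n),
      (eventA σ l k ∧ eventA σ l' k) ↔ (isFirst σ x (iSet n l k) ∧ isFirst σ y (iSet n l' k)) :=
    fun σ => and_congr (eventA_iff_isFirst x hx σ) (eventA_iff_isFirst y hy σ)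
  rw [probPerm_congr hcongr]
  have hTS : iSet n l' k ⊆ iSet n l k := by
    intro m hm
    rw [mem_iSet_iff] at hm ⊢
    constructor <;> [skip; skip] <;> omega
  have hxS : x ∈ iSet n l k := by rw [mem_iSet_iff]; omega
  have hxT : x ∉ iSet n l' k := by
    rw [mem_iSet_iff]
    push_neg
    intro hc
    omega
  have hyT : y ∈ iSet n l' k := by rw [mem_iSet_iff]; omega
  have e1 : max l k - min l k + 1 = k - l + 1 := by omega
  have e2 : max l' k - min l' k + 1 = k - l' + 1 := by omega
  rw [prob_isFirst_nested hTS hxS hxT hyT,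
    iSet_card (j := l) (k := k) (by omega) (by omega),
    iSet_card (j := l') (k := k) (by omega) (by omega), e1, e2]

lemma prob_eventA_pair_right {k r r' : ℕ} (h1 : 1 ≤ k) (h2 : k < r) (h3 : r < r') (hn : r' ≤ n) :
    probPerm (fun σ : Equiv.Perm (Fin n) => eventA σ r k ∧ eventA σ r' k)
      = 1 / (((r' - k + 1 : ℕ) : ℝ) * ((r - k + 1 : ℕ) : ℝ)) := by
  obtain ⟨x, hx⟩ : ∃ x : Fin n, (x : ℕ) + 1 = r' := ⟨⟨r' - 1, by omega⟩, by simp; omega⟩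
  obtain ⟨y, hy⟩ : ∃ y : Fin n, (y : ℕ) + 1 = r := ⟨⟨r - 1, by omega⟩, by simp; omega⟩
  have hcongr : ∀ σ : Equiv.Perm (Fin n),
      (eventA σ r k ∧ eventA σ r' k) ↔ (isFirst σ x (iSet n r' k) ∧ isFirst σ y (iSet n r k)) :=
    fun σ => (and_comm.trans
      (and_congr (eventA_iff_isFirst x hx σ) (eventA_iff_isFirst y hy σ)))
  rw [probPerm_congr hcongr]
  have hTS : iSet n r k ⊆ iSet n r' k := by
    intro m hm
    rw [mem_iSet_iff] at hm ⊢
    constructor <;> omega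
  have hxS : x ∈ iSet n r' k := by rw [mem_iSet_iff]; omega
  have hxT : x ∉ iSet n r k := by
    rw [mem_iSet_iff]
    push_neg
    intro hc
    omega
  have hyT : y ∈ iSet n r k := by rw [mem_iSet_iff]; omega
  have e1 : max r' k - min r' k + 1 = r' - k + 1 := by omega
  have e2 : max r k - min r k + 1 = r - k + 1 := by omega
  rw [prob_isFirst_nested hTS hxS hxT hyT,
    iSet_card (j := r') (k := k) (by omega) (by omega),
    iSet_card (j := r) (k := k) (by omega) (by omega), e1, e2]

lemma prob_eventA_pair_cross {l k r : ℕ} (h1 : 1 ≤ l) (h2 : l < k) (h3 : k < r) (hn : r ≤ n) :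
    probPerm (fun σ : Equiv.Perm (Fin n) => eventA σ l k ∧ eventA σ r k)
      = 1 / (((r - l + 1 : ℕ) : ℝ) * ((r - k + 1 : ℕ) : ℝ))
        + 1 / (((r - l + 1 : ℕ) : ℝ) * ((k - l + 1 : ℕ) : ℝ)) := by
  obtain ⟨x, hx⟩ : ∃ x : Fin n, (x : ℕ) + 1 = l := ⟨⟨l - 1, by omega⟩, by simp; omega⟩
  obtain ⟨y, hy⟩ : ∃ y : Fin n, (y : ℕ) + 1 = r := ⟨⟨r - 1, by omega⟩, by simp; omega⟩
  have hcongr : ∀ σ : Equiv.Perm (Fin n),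
      (eventA σ l k ∧ eventA σ r k) ↔ (isFirst σ x (iSet n l k) ∧ isFirst σ y (iSet n r k)) :=
    fun σ => and_congr (eventA_iff_isFirst x hx σ) (eventA_iff_isFirst y hy σ)
  rw [probPerm_congr hcongr]
  have hxS : x ∈ iSet n l k := by rw [mem_iSet_iff]; omega
  have hyT : y ∈ iSet n r k := by rw [mem_iSet_iff]; omega
  have hxT : x ∉ iSet n r k := by
    rw [mem_iSet_iff]; push_neg; intro hc; omega
  have hyS : y ∉ iSet n l k := by
    rw [mem_iSet_iff]; push_neg; intro hc; omega
  rw [prob_isFirst_overlap hxS hxT hyT hyS]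
  have hunion : iSet n l k ∪ iSet n r k
      = univ.filter fun m : Fin n => l ≤ (m : ℕ) + 1 ∧ (m : ℕ) + 1 ≤ r := by
    ext m
    simp only [Finset.mem_union, mem_iSet_iff, Finset.mem_filter, Finset.mem_univ, true_and]
    omega
  have e1 : max r k - min r k + 1 = r - k + 1 := by omega
  have e2 : max l k - min l k + 1 = k - l + 1 := by omega
  rw [hunion, card_filter_interval (a := l) (b := r) (by omega) (by omega) (by omega),
    iSet_card (j := r) (k := k) (by omega) (by omega),
    iSet_card (j := l) (k := k) (by omega) (by omega), e1, e2]

end EventA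

section Variance
open scoped Classical
variable {n : ℕ}

lemma ind_mul_ind (P Q : Prop) : ind P * ind Q = ind (P ∧ Q) := by
  by_cases hP : P <;> by_cases hQ : Q <;> simp [ind, hP, hQ]

lemma expPerm_ind (E : Equiv.Perm (Fin n) → Prop) :
    expPerm (fun σ => ind (E σ)) = probPerm E := by
  rw [probPerm_eq_card]
  unfold expPerm
  congr 1
  simp only [ind]
  rw [Finset.sum_boole]

lemma expPerm_sum {ι : Type*} (s : Finset ι) (f : ι → Equiv.Perm (Fin n) → ℝ) :
    expPerm (fun σ => ∑ i ∈ s, f i σ) = ∑ i ∈ s, expPerm (f i) := by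
  unfold expPerm
  rw [Finset.sum_comm, Finset.sum_div]

lemma expPerm_const (c : ℝ) : expPerm (fun _ : Equiv.Perm (Fin n) => c) = c := by
  unfold expPerm
  rw [Finset.sum_const, Finset.card_univ, nsmul_eq_mul]
  field_simp

lemma expPerm_const_mul (c : ℝ) (f : Equiv.Perm (Fin n) → ℝ) :
    expPerm (fun σ => c * f σ) = c * expPerm f := by
  unfold expPerm
  rw [← Finset.mul_sum, mul_div_assoc]

lemma expPerm_sub (f g : Equiv.Perm (Fin n) → ℝ) :
    expPerm (fun σ => f σ - g σ) = expPerm f - expPerm g := by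
  unfold expPerm
  rw [Finset.sum_sub_distrib, sub_div]

lemma expPerm_add (f g : Equiv.Perm (Fin n) → ℝ) :
    expPerm (fun σ => f σ + g σ) = expPerm f + expPerm g := by
  unfold expPerm
  rw [Finset.sum_add_distrib, add_div]

lemma varPerm_eq (X : Equiv.Perm (Fin n) → ℝ) :
    varPerm X = expPerm (fun σ => X σ * X σ) - expPerm X * expPerm X := by
  unfold varPerm
  have h : (fun σ => (X σ - expPerm X) ^ 2)
      = fun σ => (X σ * X σ - (2 * expPerm X) * X σ) + (expPerm X * expPerm X) := by
    funext σ; ring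
  rw [h, expPerm_add, expPerm_sub, expPerm_const, expPerm_const_mul]
  ring

lemma varPerm_weightW (k : ℕ) :
    varPerm (fun σ : Equiv.Perm (Fin n) => weightW σ k)
      = ∑ i : Fin n, ∑ j : Fin n, (((i : ℕ) + 1 : ℝ) * ((j : ℕ) + 1 : ℝ)) *
          (probPerm (fun σ : Equiv.Perm (Fin n) => eventA σ ((i : ℕ) + 1) k ∧ eventA σ ((j : ℕ) + 1) k)
            - probPerm (fun σ : Equiv.Perm (Fin n) => eventA σ ((i : ℕ) + 1) k)
              * probPerm (fun σ : Equiv.Perm (Fin n) => eventA σ ((j : ℕ) + 1) k)) := by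
  rw [varPerm_eq]
  have h1 : expPerm (fun σ : Equiv.Perm (Fin n) => weightW σ k * weightW σ k)
      = ∑ i : Fin n, ∑ j : Fin n, (((i : ℕ) + 1 : ℝ) * ((j : ℕ) + 1 : ℝ)) *
          probPerm (fun σ : Equiv.Perm (Fin n) => eventA σ ((i : ℕ) + 1) k ∧ eventA σ ((j : ℕ) + 1) k) := by
    have e : (fun σ : Equiv.Perm (Fin n) => weightW σ k * weightW σ k)
        = fun σ => ∑ i : Fin n, ∑ j : Fin n, (((i : ℕ) + 1 : ℝ) * ((j : ℕ) + 1 : ℝ)) *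
            ind (eventA σ ((i : ℕ) + 1) k ∧ eventA σ ((j : ℕ) + 1) k) := by
      funext σ
      unfold weightW
      rw [Finset.sum_mul_sum]
      refine Finset.sum_congr rfl fun i _ => Finset.sum_congr rfl fun j _ => ?_
      rw [mul_mul_mul_comm, ind_mul_ind]
    rw [e, expPerm_sum]
    refine Finset.sum_congr rfl fun i _ => ?_
    rw [expPerm_sum]
    refine Finset.sum_congr rfl fun j _ => ?_
    rw [expPerm_const_mul, expPerm_ind]
  have h2 : expPerm (fun σ : Equiv.Perm (Fin n) => weightW σ k)
      = ∑ i : Fin n, ((i : ℕ) + 1 : ℝ) *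
          probPerm (fun σ : Equiv.Perm (Fin n) => eventA σ ((i : ℕ) + 1) k) := by
    unfold weightW
    rw [expPerm_sum]
    refine Finset.sum_congr rfl fun i _ => ?_
    rw [expPerm_const_mul, expPerm_ind]
  rw [h1, h2, Finset.sum_mul_sum]
  rw [← Finset.sum_sub_distrib]
  refine Finset.sum_congr rfl fun i _ => ?_
  rw [← Finset.sum_sub_distrib]
  refine Finset.sum_congr rfl fun j _ => ?_
  ring

end Variance

section Split
open scoped Classical
variable {n : ℕ}

/-- covariance of the indicators of `A_{u,k}` and `A_{v,k}`. -/
noncomputable def covA (n k u v : ℕ) : ℝ :=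
  probPerm (fun σ : Equiv.Perm (Fin n) => eventA σ u k ∧ eventA σ v k)
    - probPerm (fun σ : Equiv.Perm (Fin n) => eventA σ u k)
      * probPerm (fun σ : Equiv.Perm (Fin n) => eventA σ v k)

lemma covA_symm (k u v : ℕ) : covA n k u v = covA n k v u := by
  unfold covA
  rw [probPerm_congr (fun σ => and_comm)]
  ring

lemma eventA_self (σ : Equiv.Perm (Fin n)) (k : ℕ) : eventA σ k k := by
  intro jf mf hjf h1 h2 h3
  exfalso
  simp only [min_self, max_self] at h1 h2
  exact h3 (le_antisymm h2 h1)

lemma covA_k_left (k v : ℕ) : covA n k k v = 0 := by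
  unfold covA
  rw [probPerm_congr (fun σ => (and_iff_right (eventA_self σ k))),
    probPerm_congr (E' := fun _ => True) (fun σ => iff_true_intro (eventA_self σ k)),
    probPerm_true]
  ring

lemma covA_k_right (k u : ℕ) : covA n k u k = 0 := by
  rw [covA_symm]
  exact covA_k_left k u

lemma covA_same_left {u u' k : ℕ} (h1 : 1 ≤ u) (h2 : u < u') (h3 : u' < k) (hkn : k ≤ n) :
    covA n k u u' = 0 := by
  unfold covA
  rw [prob_eventA_pair_left h1 h2 h3 hkn,
    prob_eventA (by omega) (by omega) (by omega) hkn,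
    prob_eventA (by omega) (by omega) (by omega) hkn]
  have e1 : max u k - min u k + 1 = k - u + 1 := by omega
  have e2 : max u' k - min u' k + 1 = k - u' + 1 := by omega
  rw [e1, e2]
  ring

lemma covA_same_right {k v v' : ℕ} (h1 : 1 ≤ k) (h2 : k < v) (h3 : v < v') (hn : v' ≤ n) :
    covA n k v v' = 0 := by
  unfold covA
  rw [prob_eventA_pair_right h1 h2 h3 hn,
    prob_eventA (by omega) (by omega) h1 (by omega),
    prob_eventA (by omega) (by omega) h1 (by omega)]
  have e1 : max v k - min v k + 1 = v - k + 1 := by omega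
  have e2 : max v' k - min v' k + 1 = v' - k + 1 := by omega
  rw [e1, e2]
  ring

lemma covA_diag {u k : ℕ} (h1 : 1 ≤ u) (h2 : u ≤ n) (h3 : 1 ≤ k) (h4 : k ≤ n) :
    covA n k u u = 1 / ((max u k - min u k + 1 : ℕ) : ℝ)
      - 1 / ((max u k - min u k + 1 : ℕ) : ℝ) ^ 2 := by
  unfold covA
  rw [probPerm_congr (E' := fun σ : Equiv.Perm (Fin n) => eventA σ u k)
      (fun σ => and_self_iff),
    prob_eventA h1 h2 h3 h4]
  ring

lemma covA_cross {u k v : ℕ} (h1 : 1 ≤ u) (h2 : u < k) (h3 : k < v) (hn : v ≤ n) :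
    covA n k u v
      = 1 / (((k - u + 1 : ℕ) : ℝ) * ((v - k + 1 : ℕ) : ℝ) * ((v - u + 1 : ℕ) : ℝ)) := by
  unfold covA
  rw [prob_eventA_pair_cross h1 h2 h3 hn,
    prob_eventA (by omega) (by omega) (by omega) (by omega),
    prob_eventA (by omega) (by omega) (by omega) (by omega)]
  have e1 : max u k - min u k + 1 = k - u + 1 := by omega
  have e2 : max v k - min v k + 1 = v - k + 1 := by omega
  rw [e1, e2]
  set A := ((k - u + 1 : ℕ) : ℝ) with hA
  set B := ((v - k + 1 : ℕ) : ℝ) with hB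
  set C := ((v - u + 1 : ℕ) : ℝ) with hC
  have ha : (0:ℝ) < A := by rw [hA]; positivity
  have hb : (0:ℝ) < B := by rw [hB]; positivity
  have hc : (0:ℝ) < C := by rw [hC]; positivity
  have hrel : C + 1 = A + B := by
    rw [hA, hB, hC]
    have : (v - u + 1) + 1 = (k - u + 1) + (v - k + 1) := by omega
    exact_mod_cast this
  have key : 1 / (C * B) + 1 / (C * A) - 1 / A * (1 / B) = (A + B - C) / (A * B * C) := by
    field_simp
  rw [key, show A + B - C = 1 by linarith]

lemma sum_fin_shift (f : ℕ → ℝ) :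
    ∑ i : Fin n, f ((i : ℕ) + 1) = ∑ u ∈ Finset.Ico 1 (n + 1), f u := by
  rw [Fin.sum_univ_eq_sum_range (fun i => f (i + 1)), Finset.sum_Ico_eq_sum_range]
  simp only [Nat.add_sub_cancel]
  exact Finset.sum_congr rfl fun i _ => by rw [add_comm]

lemma sum_split_k {k : ℕ} (hk1 : 1 ≤ k) (hkn : k ≤ n) (f : ℕ → ℝ) :
    ∑ u ∈ Finset.Ico 1 (n + 1), f u
      = (∑ u ∈ Finset.Ico 1 k, f u) + f k + (∑ u ∈ Finset.Ico (k + 1) (n + 1), f u) := by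
  rw [← Finset.sum_Ico_consecutive _ (by omega : 1 ≤ k) (by omega : k ≤ n + 1),
    ← Finset.sum_Ico_consecutive _ (by omega : k ≤ k + 1) (by omega : k + 1 ≤ n + 1),
    Nat.Ico_succ_singleton, Finset.sum_singleton]
  ring

/-- the main decomposition of the variance into diagonal and cross terms. -/
lemma varPerm_weightW_split {k : ℕ} (hk1 : 1 ≤ k) (hkn : k ≤ n) :
    varPerm (fun σ : Equiv.Perm (Fin n) => weightW σ k)
      = (∑ u ∈ Finset.Ico 1 k, (u : ℝ) ^ 2 * covA n k u u)
        + (∑ v ∈ Finset.Ico (k + 1) (n + 1), (v : ℝ) ^ 2 * covA n k v v)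
        + 2 * ∑ u ∈ Finset.Ico 1 k, ∑ v ∈ Finset.Ico (k + 1) (n + 1),
            ((u : ℝ) * (v : ℝ)) * covA n k u v := by
  have hg : varPerm (fun σ : Equiv.Perm (Fin n) => weightW σ k)
      = ∑ u ∈ Finset.Ico 1 (n + 1), ∑ v ∈ Finset.Ico 1 (n + 1),
          ((u : ℝ) * (v : ℝ)) * covA n k u v := by
    rw [varPerm_weightW k]
    rw [← sum_fin_shift (fun u => ∑ v ∈ Finset.Ico 1 (n + 1), ((u : ℝ) * (v : ℝ)) * covA n k u v)]
    refine Finset.sum_congr rfl fun i _ => ?_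
    rw [← sum_fin_shift (fun v => ((((i : ℕ) + 1 : ℕ) : ℝ) * (v : ℝ)) * covA n k ((i : ℕ) + 1) v)]
    refine Finset.sum_congr rfl fun j _ => ?_
    unfold covA
    push_cast
    ring
  rw [hg]
  rw [sum_split_k hk1 hkn]
  have hinner : ∀ u : ℕ, ∑ v ∈ Finset.Ico 1 (n + 1), ((u : ℝ) * (v : ℝ)) * covA n k u v
      = (∑ v ∈ Finset.Ico 1 k, ((u : ℝ) * (v : ℝ)) * covA n k u v)
        + ((u : ℝ) * (k : ℝ)) * covA n k u k
        + (∑ v ∈ Finset.Ico (k + 1) (n + 1), ((u : ℝ) * (v : ℝ)) * covA n k u v) :=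
    fun u => sum_split_k hk1 hkn _
  -- middle terms vanish
  have hmidrow : ∑ v ∈ Finset.Ico 1 (n + 1), ((k : ℝ) * (v : ℝ)) * covA n k k v = 0 := by
    refine Finset.sum_eq_zero fun v _ => ?_
    rw [covA_k_left]; ring
  have hALL : ∑ u ∈ Finset.Ico 1 k, ∑ v ∈ Finset.Ico 1 (n + 1),
        ((u : ℝ) * (v : ℝ)) * covA n k u v
      = (∑ u ∈ Finset.Ico 1 k, (u : ℝ) ^ 2 * covA n k u u)
        + ∑ u ∈ Finset.Ico 1 k, ∑ v ∈ Finset.Ico (k + 1) (n + 1),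
            ((u : ℝ) * (v : ℝ)) * covA n k u v := by
    rw [← Finset.sum_add_distrib]
    refine Finset.sum_congr rfl fun u hu => ?_
    rw [Finset.mem_Ico] at hu
    rw [hinner u, covA_k_right, mul_zero, add_zero]
    congr 1
    -- left block: only the diagonal survives
    rw [Finset.sum_eq_single_of_mem u (Finset.mem_Ico.mpr hu)]
    · ring
    · intro v hv hne
      rw [Finset.mem_Ico] at hv
      rcases hne.lt_or_gt with h | h
      · rw [covA_symm, covA_same_left hv.1 h hu.2 hkn]; ring
      · rw [covA_same_left hu.1 h hv.2 hkn]; ring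
  have hBLL : ∑ u ∈ Finset.Ico (k + 1) (n + 1), ∑ v ∈ Finset.Ico 1 (n + 1),
        ((u : ℝ) * (v : ℝ)) * covA n k u v
      = (∑ v ∈ Finset.Ico (k + 1) (n + 1), (v : ℝ) ^ 2 * covA n k v v)
        + ∑ u ∈ Finset.Ico 1 k, ∑ v ∈ Finset.Ico (k + 1) (n + 1),
            ((u : ℝ) * (v : ℝ)) * covA n k u v := by
    have hstep : ∀ u ∈ Finset.Ico (k + 1) (n + 1),
        ∑ v ∈ Finset.Ico 1 (n + 1), ((u : ℝ) * (v : ℝ)) * covA n k u v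
        = (u : ℝ) ^ 2 * covA n k u u
          + ∑ v ∈ Finset.Ico 1 k, ((u : ℝ) * (v : ℝ)) * covA n k u v := by
      intro u hu
      rw [Finset.mem_Ico] at hu
      rw [hinner u, covA_k_right, mul_zero, add_zero]
      -- right block: only the diagonal survives
      have : ∑ v ∈ Finset.Ico (k + 1) (n + 1), ((u : ℝ) * (v : ℝ)) * covA n k u v
          = (u : ℝ) ^ 2 * covA n k u u := by
        rw [Finset.sum_eq_single_of_mem u (Finset.mem_Ico.mpr hu)]
        · ring
        · intro v hv hne
          rw [Finset.mem_Ico] at hv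
          rcases hne.lt_or_gt with h | h
          · rw [covA_symm, covA_same_right hk1 hv.1 h (by omega)]; ring
          · rw [covA_same_right hk1 hu.1 h (by omega)]; ring
      rw [this]
      ring
    rw [Finset.sum_congr rfl hstep, Finset.sum_add_distrib]
    congr 1
    -- swap the order of the cross sum and use symmetry
    rw [Finset.sum_comm]
    refine Finset.sum_congr rfl fun u _ => Finset.sum_congr rfl fun v _ => ?_
    rw [covA_symm]
    ring
  rw [hmidrow, hALL, hBLL]
  ring

end Split

section Analysis

lemma H1_eq_harmonic (m : ℕ) : H1 m = ((harmonic m : ℚ) : ℝ) := by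
  unfold H1 harmonic
  push_cast
  refine Finset.sum_congr rfl fun j _ => ?_
  rw [one_div]

lemma log_le_H1 {m : ℕ} (hm : 1 ≤ m) : Real.log m ≤ H1 m := by
  rw [H1_eq_harmonic]
  refine le_trans ?_ (log_add_one_le_harmonic m)
  apply Real.log_le_log (by positivity)
  exact_mod_cast Nat.le_succ m

lemma H1_le_log (m : ℕ) : H1 m ≤ 1 + Real.log m := by
  rw [H1_eq_harmonic]
  exact harmonic_le_one_add_log m

/-- tail bound for sums of inverse squares. -/
lemma tail_sq {a : ℝ} (ha : 1 ≤ a) (m : ℕ) :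
    ∑ j ∈ Finset.range m, 1 / ((j : ℝ) + a + 1) ^ 2 ≤ 1 / a - 1 / (a + m) := by
  induction m with
  | zero => simp
  | succ m ih =>
    rw [Finset.sum_range_succ]
    have h1 : (0:ℝ) < a + m := by positivity
    have h2 : (0:ℝ) < a + (m + 1 : ℕ) := by positivity
    have key : 1 / ((m : ℝ) + a + 1) ^ 2 ≤ 1 / (a + m) - 1 / (a + (m + 1 : ℕ)) := by
      have e : 1 / (a + m) - 1 / (a + (m+1:ℕ)) = 1 / ((a + m) * (a + m + 1)) := by
        push_cast
        rw [div_sub_div _ _ (ne_of_gt h1) (by positivity)]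
        congr 1 <;> ring
      rw [e]
      apply one_div_le_one_div_of_le (by positivity)
      nlinarith [h1]
    calc _ ≤ (1 / a - 1 / (a + m)) + (1 / (a + m) - 1 / (a + (m + 1 : ℕ))) :=
          add_le_add ih key
      _ = 1 / a - 1 / (a + (m + 1 : ℕ)) := by ring
  
lemma tail_sq' {a : ℝ} (ha : 1 ≤ a) (m : ℕ) :
    ∑ j ∈ Finset.range m, 1 / ((j : ℝ) + a + 1) ^ 2 ≤ 1 / a := by
  refine (tail_sq ha m).trans ?_
  have : (0:ℝ) ≤ 1 / (a + m) := by positivity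
  linarith

lemma H2_nonneg (m : ℕ) : 0 ≤ H2 m := by
  unfold H2
  positivity

lemma H2_le_two (m : ℕ) : H2 m ≤ 2 := by
  unfold H2
  cases m with
  | zero => norm_num
  | succ m =>
    rw [Finset.sum_range_succ']
    have h1 : ∑ j ∈ Finset.range m, (1:ℝ) / (((j+1 : ℕ) : ℝ) + 1) ^ 2 ≤ 1 := by
      have h2 := tail_sq' (a := 1) le_rfl m
      refine le_trans (le_of_eq (Finset.sum_congr rfl fun j _ => ?_)) (by simpa using h2)
      push_cast
      ring_nf
    push_cast at h1 ⊢
    simp only [one_div] at h1 ⊢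
    norm_num
    linarith

/-- the elementary sum `∑_{d=1}^{M-1} d/(d+1)² = H1 M - H2 M`. -/
lemma sum_g_eq (M : ℕ) :
    ∑ d ∈ Finset.Ico 1 M, (d : ℝ) / ((d : ℝ) + 1) ^ 2 = H1 M - H2 M := by
  have hpt : ∀ d : ℕ, (d : ℝ) / ((d : ℝ) + 1) ^ 2 = 1 / ((d:ℝ) + 1) - 1 / ((d:ℝ) + 1) ^ 2 := by
    intro d
    have : (0:ℝ) < (d:ℝ) + 1 := by positivity
    field_simp
    ring
  rcases Nat.lt_or_ge M 1 with hM | hM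
  · interval_cases M
    simp [H1, H2]
  · have hsplit : ∑ d ∈ Finset.range M, ((d : ℝ) / ((d : ℝ) + 1) ^ 2)
        = ∑ d ∈ Finset.Ico 1 M, (d : ℝ) / ((d : ℝ) + 1) ^ 2 := by
      rw [Finset.range_eq_Ico, ← Finset.sum_Ico_consecutive _ (Nat.zero_le 1) hM]
      norm_num
    rw [← hsplit]
    unfold H1 H2
    rw [← Finset.sum_sub_distrib]
    refine Finset.sum_congr rfl fun d _ => ?_
    push_cast
    rw [hpt d]

lemma sum_reflect {k : ℕ} (f : ℕ → ℝ) :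
    ∑ u ∈ Finset.Ico 1 k, f (k - u) = ∑ d ∈ Finset.Ico 1 k, f d := by
  refine Finset.sum_nbij' (i := fun u => k - u) (j := fun d => k - d) ?_ ?_ ?_ ?_ ?_
  · intro a ha; simp only [Finset.mem_Ico] at ha ⊢; omega
  · intro a ha; simp only [Finset.mem_Ico] at ha ⊢; omega
  · intro a ha; simp only [Finset.mem_Ico] at ha; omega
  · intro a ha; simp only [Finset.mem_Ico] at ha; omega
  · intro a ha; rfl

end Analysis

section D1
open scoped Classical
variable {n : ℕ}

/-- abbreviation for the summand `d/(d+1)²`. -/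
noncomputable def gfun (d : ℕ) : ℝ := (d : ℝ) / ((d : ℝ) + 1) ^ 2

lemma gfun_nonneg (d : ℕ) : 0 ≤ gfun d := by unfold gfun; positivity

lemma covA_diag_left {u k : ℕ} (h1 : 1 ≤ u) (h2 : u < k) (hkn : k ≤ n) :
    covA n k u u = gfun (k - u) := by
  rw [covA_diag (n := n) h1 (by omega) (by omega) hkn]
  have e : max u k - min u k + 1 = (k - u) + 1 := by omega
  rw [e]
  unfold gfun
  have h : (0:ℝ) < ((k - u : ℕ) : ℝ) + 1 := by positivity
  rw [show (((k - u) + 1 : ℕ) : ℝ) = ((k - u : ℕ) : ℝ) + 1 by push_cast; ring]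
  field_simp
  ring

lemma covA_diag_right {k v : ℕ} (h1 : 1 ≤ k) (h2 : k < v) (hvn : v ≤ n) :
    covA n k v v = gfun (v - k) := by
  rw [covA_diag (n := n) (by omega) hvn h1 (by omega)]
  have e : max v k - min v k + 1 = (v - k) + 1 := by omega
  rw [e]
  unfold gfun
  have h : (0:ℝ) < ((v - k : ℕ) : ℝ) + 1 := by positivity
  rw [show (((v - k) + 1 : ℕ) : ℝ) = ((v - k : ℕ) : ℝ) + 1 by push_cast; ring]
  field_simp
  ring

lemma abs_H_log (k : ℕ) (hk : 1 ≤ k) : |H1 k - H2 k - Real.log k| ≤ 3 := by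
  have h1 := log_le_H1 hk
  have h2 := H1_le_log k
  have h3 := H2_nonneg k
  have h4 := H2_le_two k
  rw [abs_le]
  constructor <;> linarith

lemma D1_est {k : ℕ} (hk1 : 1 ≤ k) (hkn : k ≤ n) :
    |(∑ u ∈ Finset.Ico 1 k, (u : ℝ) ^ 2 * covA n k u u) - (k : ℝ) ^ 2 * Real.log k|
      ≤ 5 * k * n := by
  have hstep : ∑ u ∈ Finset.Ico 1 k, (u : ℝ) ^ 2 * covA n k u u
      = ∑ d ∈ Finset.Ico 1 k, ((k - d : ℕ) : ℝ) ^ 2 * gfun d := by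
    rw [← sum_reflect (fun d => ((k - d : ℕ) : ℝ) ^ 2 * gfun d)]
    refine Finset.sum_congr rfl fun u hu => ?_
    rw [Finset.mem_Ico] at hu
    rw [covA_diag_left hu.1 hu.2 hkn, show k - (k - u) = u from by omega]
  rw [hstep]
  have hsplit : ∑ d ∈ Finset.Ico 1 k, ((k - d : ℕ) : ℝ) ^ 2 * gfun d
      = (k : ℝ) ^ 2 * (H1 k - H2 k)
        - ∑ d ∈ Finset.Ico 1 k, (2 * (k:ℝ) * (d:ℝ) - (d:ℝ)^2) * gfun d := by
    rw [← sum_g_eq k, Finset.mul_sum, ← Finset.sum_sub_distrib]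
    refine Finset.sum_congr rfl fun d hd => ?_
    rw [Finset.mem_Ico] at hd
    have hcd : ((k - d : ℕ) : ℝ) = (k : ℝ) - (d : ℝ) := by
      rw [Nat.cast_sub (by omega)]
    rw [hcd]
    unfold gfun
    ring
  rw [hsplit]
  have hE : |∑ d ∈ Finset.Ico 1 k, (2 * (k:ℝ) * (d:ℝ) - (d:ℝ)^2) * gfun d|
      ≤ 2 * (k:ℝ) * (k:ℝ) := by
    refine le_trans (Finset.abs_sum_le_sum_abs _ _) ?_
    have hterm : ∀ d ∈ Finset.Ico 1 k,
        |(2 * (k:ℝ) * (d:ℝ) - (d:ℝ)^2) * gfun d| ≤ 2 * (k:ℝ) := by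
      intro d hd
      rw [Finset.mem_Ico] at hd
      have hd0 : (0:ℝ) ≤ (d:ℝ) := by positivity
      have hdk : (d:ℝ) ≤ (k:ℝ) := by exact_mod_cast le_of_lt hd.2
      have hg0 : (0:ℝ) ≤ gfun d := gfun_nonneg d
      have hpos : (0:ℝ) < ((d:ℝ)+1)^2 := by positivity
      rw [abs_le]
      constructor
      · have h5 : 0 ≤ (2 * (k:ℝ) * (d:ℝ) - (d:ℝ)^2) * gfun d := by
          apply mul_nonneg _ hg0
          nlinarith
        have hk0 : (0:ℝ) ≤ (k:ℝ) := by positivity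
        linarith
      · unfold gfun
        rw [mul_div_assoc', div_le_iff₀ hpos]
        nlinarith
    refine le_trans (Finset.sum_le_sum hterm) ?_
    rw [Finset.sum_const, Nat.card_Ico, nsmul_eq_mul]
    have : ((k - 1 : ℕ) : ℝ) ≤ (k : ℝ) := by
      exact_mod_cast Nat.sub_le k 1
    nlinarith [this]
  have hmain : |(k : ℝ) ^ 2 * (H1 k - H2 k) - (k : ℝ) ^ 2 * Real.log k| ≤ 3 * (k:ℝ) ^ 2 := by
    rw [← mul_sub, abs_mul, abs_of_nonneg (by positivity : (0:ℝ) ≤ (k:ℝ)^2)]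
    have := abs_H_log k hk1
    calc (k:ℝ)^2 * |H1 k - H2 k - Real.log k| ≤ (k:ℝ)^2 * 3 :=
          mul_le_mul_of_nonneg_left this (by positivity)
      _ = 3 * k ^ 2 := by ring
  have hkn' : (k : ℝ) ≤ (n : ℝ) := by exact_mod_cast hkn
  have hk0 : (0:ℝ) ≤ (k:ℝ) := by positivity
  calc |(k : ℝ) ^ 2 * (H1 k - H2 k)
        - ∑ d ∈ Finset.Ico 1 k, (2 * (k:ℝ) * (d:ℝ) - (d:ℝ)^2) * gfun d
        - (k : ℝ) ^ 2 * Real.log k|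
      ≤ |(k : ℝ) ^ 2 * (H1 k - H2 k) - (k : ℝ) ^ 2 * Real.log k|
        + |∑ d ∈ Finset.Ico 1 k, (2 * (k:ℝ) * (d:ℝ) - (d:ℝ)^2) * gfun d| := by
        rw [sub_right_comm]
        exact abs_sub _ _
    _ ≤ 3 * (k:ℝ) ^ 2 + 2 * (k:ℝ) * (k:ℝ) := add_le_add hmain hE
    _ = 5 * (k:ℝ) * (k:ℝ) := by ring
    _ ≤ 5 * (k:ℝ) * (n:ℝ) := by nlinarith
end D1

section D2
open scoped Classical
variable {n : ℕ}

lemma sum_Ico_cast_id (M : ℕ) :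
    ∑ e ∈ Finset.Ico 1 (M + 1), (e : ℝ) = (M : ℝ) * ((M : ℝ) + 1) / 2 := by
  have h1 : ∑ e ∈ Finset.Ico 1 (M + 1), (e : ℕ) = ∑ e ∈ Finset.range (M + 1), e := by
    rw [Finset.range_eq_Ico, ← Finset.sum_Ico_consecutive _ (Nat.zero_le 1) (by omega)]
    norm_num
  have h2 : (∑ e ∈ Finset.range (M + 1), e) * 2 = (M + 1) * M :=
    Finset.sum_range_id_mul_two (M + 1)
  have h3 : ((∑ e ∈ Finset.Ico 1 (M + 1), (e : ℕ) : ℕ) : ℝ)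
      = ∑ e ∈ Finset.Ico 1 (M + 1), (e : ℝ) := by push_cast; rfl
  rw [← h3, h1]
  have h4 : ((∑ e ∈ Finset.range (M + 1), e : ℕ) : ℝ) * 2 = ((M : ℝ) + 1) * M := by
    exact_mod_cast congrArg (Nat.cast (R := ℝ)) h2
  linarith

lemma gfun_term_lower (k e : ℕ) (he : 1 ≤ e) :
    (e : ℝ) - 2 ≤ (2 * (k:ℝ) * (e:ℝ) + (e:ℝ) ^ 2) * gfun e := by
  have he0 : (1:ℝ) ≤ (e:ℝ) := by exact_mod_cast he
  have hk0 : (0:ℝ) ≤ (k:ℝ) := by positivity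
  have hpos : (0:ℝ) < ((e:ℝ)+1)^2 := by positivity
  unfold gfun
  rw [mul_div_assoc', le_div_iff₀ hpos]
  nlinarith

lemma gfun_term_upper (k e : ℕ) (he : 1 ≤ e) :
    (2 * (k:ℝ) * (e:ℝ) + (e:ℝ) ^ 2) * gfun e ≤ 2 * (k:ℝ) + (e : ℝ) := by
  have he0 : (1:ℝ) ≤ (e:ℝ) := by exact_mod_cast he
  have hk0 : (0:ℝ) ≤ (k:ℝ) := by positivity
  have hpos : (0:ℝ) < ((e:ℝ)+1)^2 := by positivity
  unfold gfun
  rw [mul_div_assoc', div_le_iff₀ hpos]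
  nlinarith

lemma D2_est {k : ℕ} (hk1 : 1 ≤ k) (hkn : k ≤ n) :
    |(∑ v ∈ Finset.Ico (k + 1) (n + 1), (v : ℝ) ^ 2 * covA n k v v)
      - (k : ℝ) ^ 2 * Real.log ((n - k + 1 : ℕ) : ℝ) - (n : ℝ) ^ 2 / 2|
      ≤ 9 * (k : ℝ) * (n : ℝ) := by
  set m := n - k with hm
  have hstep : ∑ v ∈ Finset.Ico (k + 1) (n + 1), (v : ℝ) ^ 2 * covA n k v v
      = ∑ e ∈ Finset.Ico 1 (m + 1), ((e + k : ℕ) : ℝ) ^ 2 * gfun e := by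
    refine Finset.sum_nbij' (i := fun v => v - k) (j := fun e => e + k) ?_ ?_ ?_ ?_ ?_
    · intro a ha; simp only [Finset.mem_Ico] at ha ⊢; omega
    · intro a ha; simp only [Finset.mem_Ico] at ha ⊢; omega
    · intro a ha; simp only [Finset.mem_Ico] at ha; omega
    · intro a ha; simp only [Finset.mem_Ico] at ha; omega
    · intro v hv
      simp only [Finset.mem_Ico] at hv
      rw [covA_diag_right hk1 (by omega) (by omega), show v - k + k = v from by omega]
  rw [hstep]
  have hsplit : ∑ e ∈ Finset.Ico 1 (m + 1), ((e + k : ℕ) : ℝ) ^ 2 * gfun e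
      = (k : ℝ) ^ 2 * (H1 (m + 1) - H2 (m + 1))
        + ∑ e ∈ Finset.Ico 1 (m + 1), (2 * (k:ℝ) * (e:ℝ) + (e:ℝ) ^ 2) * gfun e := by
    rw [← sum_g_eq (m + 1), Finset.mul_sum, ← Finset.sum_add_distrib]
    refine Finset.sum_congr rfl fun e he => ?_
    have hek : ((e + k : ℕ) : ℝ) = (e : ℝ) + (k : ℝ) := by push_cast; ring
    rw [hek]
    unfold gfun
    ring
  rw [hsplit]
  set S := ∑ e ∈ Finset.Ico 1 (m + 1), (2 * (k:ℝ) * (e:ℝ) + (e:ℝ) ^ 2) * gfun e with hS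
  -- bounds on S
  have hTlow : ∑ e ∈ Finset.Ico 1 (m + 1), ((e : ℝ) - 2) ≤ S :=
    Finset.sum_le_sum fun e he =>
      gfun_term_lower k e (Finset.mem_Ico.mp he).1
  have hTup : S ≤ ∑ e ∈ Finset.Ico 1 (m + 1), (2 * (k:ℝ) + (e : ℝ)) :=
    Finset.sum_le_sum fun e he =>
      gfun_term_upper k e (Finset.mem_Ico.mp he).1
  have hcard : (Finset.Ico 1 (m + 1)).card = m := by rw [Nat.card_Ico]; omega
  have hsum1 : ∑ e ∈ Finset.Ico 1 (m + 1), ((e : ℝ) - 2)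
      = (m : ℝ) * ((m : ℝ) + 1) / 2 - 2 * m := by
    rw [Finset.sum_sub_distrib, sum_Ico_cast_id, Finset.sum_const, hcard, nsmul_eq_mul]
    ring
  have hsum2 : ∑ e ∈ Finset.Ico 1 (m + 1), (2 * (k:ℝ) + (e : ℝ))
      = 2 * (k:ℝ) * m + (m : ℝ) * ((m : ℝ) + 1) / 2 := by
    rw [Finset.sum_add_distrib, sum_Ico_cast_id, Finset.sum_const, hcard, nsmul_eq_mul]
    ring
  have hmr : (m : ℝ) = (n : ℝ) - (k : ℝ) := by
    rw [hm, Nat.cast_sub hkn]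
  have hk' : (1:ℝ) ≤ (k:ℝ) := by exact_mod_cast hk1
  have hkn' : (k:ℝ) ≤ (n:ℝ) := by exact_mod_cast hkn
  have habsS : |S - (n:ℝ)^2/2| ≤ 3 * (k:ℝ) * (n:ℝ) := by
    rw [abs_le]
    constructor
    · rw [hsum1] at hTlow
      nlinarith
    · rw [hsum2] at hTup
      nlinarith
  have hmain : |(k : ℝ) ^ 2 * (H1 (m+1) - H2 (m+1))
      - (k : ℝ) ^ 2 * Real.log ((n - k + 1 : ℕ) : ℝ)| ≤ 3 * (k:ℝ) ^ 2 := by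
    have e1 : ((n - k + 1 : ℕ) : ℝ) = ((m + 1 : ℕ) : ℝ) := by rw [hm]
    rw [e1, ← mul_sub, abs_mul, abs_of_nonneg (by positivity : (0:ℝ) ≤ (k:ℝ)^2)]
    have h := abs_H_log (m + 1) (by omega)
    calc (k:ℝ)^2 * |H1 (m+1) - H2 (m+1) - Real.log ((m+1 : ℕ):ℝ)| ≤ (k:ℝ)^2 * 3 := by
          apply mul_le_mul_of_nonneg_left _ (by positivity)
          exact_mod_cast h
      _ = 3 * (k:ℝ)^2 := by ring
  calc |(k : ℝ) ^ 2 * (H1 (m+1) - H2 (m+1)) + S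
        - (k : ℝ) ^ 2 * Real.log ((n - k + 1 : ℕ) : ℝ) - (n : ℝ) ^ 2 / 2|
      ≤ |(k : ℝ) ^ 2 * (H1 (m+1) - H2 (m+1))
          - (k : ℝ) ^ 2 * Real.log ((n - k + 1 : ℕ) : ℝ)| + |S - (n:ℝ)^2/2| := by
        have : (k : ℝ) ^ 2 * (H1 (m+1) - H2 (m+1)) + S
            - (k : ℝ) ^ 2 * Real.log ((n - k + 1 : ℕ) : ℝ) - (n : ℝ) ^ 2 / 2
            = ((k : ℝ) ^ 2 * (H1 (m+1) - H2 (m+1))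
              - (k : ℝ) ^ 2 * Real.log ((n - k + 1 : ℕ) : ℝ)) + (S - (n:ℝ)^2/2) := by ring
        rw [this]
        exact abs_add_le _ _
    _ ≤ 3 * (k:ℝ) ^ 2 + 3 * (k:ℝ) * (n:ℝ) := add_le_add hmain habsS
    _ ≤ 9 * (k : ℝ) * (n : ℝ) := by nlinarith
end D2

section Cross
open scoped Classical
variable {n : ℕ}

lemma cross_term_bound {u v k : ℕ} (h1 : 1 ≤ u) (h2 : u < k) (h3 : k < v) (h4 : v ≤ n) :
    (u:ℝ) * (v:ℝ) / (((k-u+1:ℕ):ℝ) * ((v-k+1:ℕ):ℝ) * ((v-u+1:ℕ):ℝ))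
      ≤ (k:ℝ) * (n:ℝ) * ((1/((k-u+1:ℕ):ℝ)) * (1/((v-u+1:ℕ):ℝ)^2)
          + (1/((v-k+1:ℕ):ℝ)) * (1/((v-u+1:ℕ):ℝ)^2)) := by
  set A := ((k-u+1:ℕ):ℝ) with hA
  set B := ((v-k+1:ℕ):ℝ) with hB
  set C := ((v-u+1:ℕ):ℝ) with hC
  have hA1 : (1:ℝ) ≤ A := by rw [hA]; exact_mod_cast (by omega : 1 ≤ k-u+1)
  have hB1 : (1:ℝ) ≤ B := by rw [hB]; exact_mod_cast (by omega : 1 ≤ v-k+1)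
  have hC1 : (1:ℝ) ≤ C := by rw [hC]; exact_mod_cast (by omega : 1 ≤ v-u+1)
  have hA0 : (0:ℝ) < A := by linarith
  have hB0 : (0:ℝ) < B := by linarith
  have hC0 : (0:ℝ) < C := by linarith
  have hCAB : C ≤ A + B := by
    rw [hA, hB, hC]
    have h : (v-u+1) ≤ (k-u+1) + (v-k+1) := by omega
    calc ((v-u+1:ℕ):ℝ) ≤ (((k-u+1) + (v-k+1) : ℕ):ℝ) := by exact_mod_cast h
      _ = ((k-u+1:ℕ):ℝ) + ((v-k+1:ℕ):ℝ) := by push_cast; ring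
  have huv : (u:ℝ) * (v:ℝ) ≤ (k:ℝ) * (n:ℝ) := by
    have hu : (u:ℝ) ≤ (k:ℝ) := by exact_mod_cast le_of_lt h2
    have hv : (v:ℝ) ≤ (n:ℝ) := by exact_mod_cast h4
    have hu0 : (0:ℝ) ≤ (u:ℝ) := by positivity
    have hv0 : (0:ℝ) ≤ (v:ℝ) := by positivity
    nlinarith
  have key : ((u:ℝ) * (v:ℝ)) * C ≤ ((k:ℝ) * (n:ℝ)) * (A + B) :=
    mul_le_mul huv hCAB (by linarith) (by positivity)
  calc (u:ℝ) * (v:ℝ) / (A * B * C)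
      ≤ ((k:ℝ) * (n:ℝ) * (A + B)) / (A * B * C^2) := by
        rw [div_le_div_iff₀ (by positivity) (by positivity)]
        nlinarith [mul_le_mul_of_nonneg_right key (show (0:ℝ) ≤ A * B * C by positivity)]
    _ = (k:ℝ) * (n:ℝ) * ((1/A) * (1/C^2) + (1/B) * (1/C^2)) := by
        field_simp
        ring

lemma inner_tail_right {u k : ℕ} (h1 : u < k) (hkn : k ≤ n) :
    ∑ v ∈ Finset.Ico (k+1) (n+1), 1 / (((v-u+1:ℕ):ℝ))^2 ≤ 1 / ((k-u+1:ℕ):ℝ) := by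
  rw [Finset.sum_Ico_eq_sum_range]
  have ha : (1:ℝ) ≤ ((k-u+1:ℕ):ℝ) := by exact_mod_cast (by omega : 1 ≤ k-u+1)
  refine le_trans (le_of_eq (Finset.sum_congr rfl fun j hj => ?_)) (tail_sq' ha _)
  have h : (k+1+j) - u + 1 = j + (k - u + 1) + 1 := by omega
  rw [h]
  push_cast
  ring_nf

lemma inner_tail_left {v k : ℕ} (h1 : k < v) (hk : 1 ≤ k) :
    ∑ u ∈ Finset.Ico 1 k, 1 / (((v-u+1:ℕ):ℝ))^2 ≤ 1 / ((v-k+1:ℕ):ℝ) := by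
  have hstep : ∑ u ∈ Finset.Ico 1 k, 1 / (((v-u+1:ℕ):ℝ))^2
      = ∑ d ∈ Finset.Ico 1 k, 1 / (((d + (v-k+1):ℕ):ℝ))^2 := by
    refine Finset.sum_nbij' (i := fun u => k - u) (j := fun d => k - d) ?_ ?_ ?_ ?_ ?_
    · intro a ha; simp only [Finset.mem_Ico] at ha ⊢; omega
    · intro a ha; simp only [Finset.mem_Ico] at ha ⊢; omega
    · intro a ha; simp only [Finset.mem_Ico] at ha; omega
    · intro a ha; simp only [Finset.mem_Ico] at ha; omega
    · intro a ha
      simp only [Finset.mem_Ico] at ha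
      rw [show (k - a) + (v - k + 1) = v - a + 1 from by omega]
  rw [hstep, Finset.sum_Ico_eq_sum_range]
  have ha : (1:ℝ) ≤ ((v-k+1:ℕ):ℝ) := by exact_mod_cast (by omega : 1 ≤ v-k+1)
  refine le_trans (le_of_eq (Finset.sum_congr rfl fun j hj => ?_)) (tail_sq' ha _)
  have h : (1+j) + (v-k+1) = j + (v - k + 1) + 1 := by omega
  rw [h]
  push_cast
  ring_nf

lemma outer_left {k : ℕ} (hk : 1 ≤ k) :
    ∑ u ∈ Finset.Ico 1 k, 1 / (((k-u+1:ℕ):ℝ))^2 ≤ 1 := by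
  have hstep : ∑ u ∈ Finset.Ico 1 k, 1 / (((k-u+1:ℕ):ℝ))^2
      = ∑ d ∈ Finset.Ico 1 k, 1 / (((d+1:ℕ):ℝ))^2 := by
    refine Finset.sum_nbij' (i := fun u => k - u) (j := fun d => k - d) ?_ ?_ ?_ ?_ ?_
    · intro a ha; simp only [Finset.mem_Ico] at ha ⊢; omega
    · intro a ha; simp only [Finset.mem_Ico] at ha ⊢; omega
    · intro a ha; simp only [Finset.mem_Ico] at ha; omega
    · intro a ha; simp only [Finset.mem_Ico] at ha; omega
    · intro a ha
      rfl
  rw [hstep, Finset.sum_Ico_eq_sum_range]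
  refine le_trans (le_of_eq (Finset.sum_congr rfl fun j hj => ?_))
    ((tail_sq' (a := 1) le_rfl _).trans (by norm_num))
  push_cast
  ring_nf

lemma outer_right {k : ℕ} (hkn : k ≤ n) :
    ∑ v ∈ Finset.Ico (k+1) (n+1), 1 / (((v-k+1:ℕ):ℝ))^2 ≤ 1 := by
  rw [Finset.sum_Ico_eq_sum_range]
  refine le_trans (le_of_eq (Finset.sum_congr rfl fun j hj => ?_))
    ((tail_sq' (a := 1) le_rfl _).trans (by norm_num))
  have h : (k+1+j) - k + 1 = j + 1 + 1 := by omega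
  rw [h]
  push_cast
  ring_nf

lemma cross_est {k : ℕ} (hk1 : 1 ≤ k) (hkn : k ≤ n) :
    |∑ u ∈ Finset.Ico 1 k, ∑ v ∈ Finset.Ico (k+1) (n+1),
        ((u : ℝ) * (v : ℝ)) * covA n k u v| ≤ 2 * (k:ℝ) * (n:ℝ) := by
  have hrw : ∑ u ∈ Finset.Ico 1 k, ∑ v ∈ Finset.Ico (k+1) (n+1),
        ((u : ℝ) * (v : ℝ)) * covA n k u v
      = ∑ u ∈ Finset.Ico 1 k, ∑ v ∈ Finset.Ico (k+1) (n+1),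
          (u:ℝ) * (v:ℝ) / (((k-u+1:ℕ):ℝ) * ((v-k+1:ℕ):ℝ) * ((v-u+1:ℕ):ℝ)) := by
    refine Finset.sum_congr rfl fun u hu => Finset.sum_congr rfl fun v hv => ?_
    rw [Finset.mem_Ico] at hu hv
    rw [covA_cross hu.1 hu.2 hv.1 (by omega)]
    rw [mul_one_div]
  rw [hrw]
  have hnonneg : (0:ℝ) ≤ ∑ u ∈ Finset.Ico 1 k, ∑ v ∈ Finset.Ico (k+1) (n+1),
      (u:ℝ) * (v:ℝ) / (((k-u+1:ℕ):ℝ) * ((v-k+1:ℕ):ℝ) * ((v-u+1:ℕ):ℝ)) :=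
    Finset.sum_nonneg fun u _ => Finset.sum_nonneg fun v _ => by positivity
  rw [abs_of_nonneg hnonneg]
  have hbd : ∑ u ∈ Finset.Ico 1 k, ∑ v ∈ Finset.Ico (k+1) (n+1),
        (u:ℝ) * (v:ℝ) / (((k-u+1:ℕ):ℝ) * ((v-k+1:ℕ):ℝ) * ((v-u+1:ℕ):ℝ))
      ≤ ∑ u ∈ Finset.Ico 1 k, ∑ v ∈ Finset.Ico (k+1) (n+1),
          ((k:ℝ) * (n:ℝ) * ((1/((k-u+1:ℕ):ℝ)) * (1/((v-u+1:ℕ):ℝ)^2))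
            + (k:ℝ) * (n:ℝ) * ((1/((v-k+1:ℕ):ℝ)) * (1/((v-u+1:ℕ):ℝ)^2))) := by
    refine Finset.sum_le_sum fun u hu => Finset.sum_le_sum fun v hv => ?_
    rw [Finset.mem_Ico] at hu hv
    rw [← mul_add]
    exact cross_term_bound hu.1 hu.2 hv.1 (by omega)
  refine le_trans hbd ?_
  have e0 : ∀ u ∈ Finset.Ico 1 k, (∑ v ∈ Finset.Ico (k+1) (n+1),
        ((k:ℝ) * (n:ℝ) * ((1/((k-u+1:ℕ):ℝ)) * (1/((v-u+1:ℕ):ℝ)^2))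
          + (k:ℝ) * (n:ℝ) * ((1/((v-k+1:ℕ):ℝ)) * (1/((v-u+1:ℕ):ℝ)^2))))
      = (k:ℝ) * (n:ℝ) * ((1/((k-u+1:ℕ):ℝ)) * ∑ v ∈ Finset.Ico (k+1) (n+1), (1/((v-u+1:ℕ):ℝ)^2))
        + ∑ v ∈ Finset.Ico (k+1) (n+1),
            (k:ℝ) * (n:ℝ) * ((1/((v-k+1:ℕ):ℝ)) * (1/((v-u+1:ℕ):ℝ)^2)) := by
    intro u _
    rw [Finset.sum_add_distrib, ← Finset.mul_sum, ← Finset.mul_sum]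
  rw [Finset.sum_congr rfl e0, Finset.sum_add_distrib]
  have hk0 : (0:ℝ) ≤ (k:ℝ) * (n:ℝ) := by positivity
  have hpart1 : ∑ u ∈ Finset.Ico 1 k,
      (k:ℝ) * (n:ℝ) * ((1/((k-u+1:ℕ):ℝ))
        * ∑ v ∈ Finset.Ico (k+1) (n+1), (1/((v-u+1:ℕ):ℝ)^2))
      ≤ (k:ℝ) * (n:ℝ) := by
    calc ∑ u ∈ Finset.Ico 1 k, (k:ℝ) * (n:ℝ) * ((1/((k-u+1:ℕ):ℝ))
          * ∑ v ∈ Finset.Ico (k+1) (n+1), (1/((v-u+1:ℕ):ℝ)^2))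
        ≤ ∑ u ∈ Finset.Ico 1 k, (k:ℝ) * (n:ℝ) * (1/((k-u+1:ℕ):ℝ)^2) := by
          refine Finset.sum_le_sum fun u hu => ?_
          rw [Finset.mem_Ico] at hu
          refine mul_le_mul_of_nonneg_left ?_ hk0
          have hin := inner_tail_right (n := n) hu.2 hkn
          calc (1/((k-u+1:ℕ):ℝ)) * ∑ v ∈ Finset.Ico (k+1) (n+1), (1/((v-u+1:ℕ):ℝ)^2)
              ≤ (1/((k-u+1:ℕ):ℝ)) * (1/((k-u+1:ℕ):ℝ)) := by
                refine mul_le_mul_of_nonneg_left ?_ (by positivity)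
                exact_mod_cast hin
            _ = 1/((k-u+1:ℕ):ℝ)^2 := by rw [pow_two, one_div_mul_one_div]
      _ = (k:ℝ) * (n:ℝ) * ∑ u ∈ Finset.Ico 1 k, (1/((k-u+1:ℕ):ℝ)^2) := by
          rw [← Finset.mul_sum]
      _ ≤ (k:ℝ) * (n:ℝ) * 1 := mul_le_mul_of_nonneg_left (outer_left hk1) hk0
      _ = (k:ℝ) * (n:ℝ) := by ring
  have hpart2 : ∑ u ∈ Finset.Ico 1 k, ∑ v ∈ Finset.Ico (k+1) (n+1),
      (k:ℝ) * (n:ℝ) * ((1/((v-k+1:ℕ):ℝ)) * (1/((v-u+1:ℕ):ℝ)^2))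
      ≤ (k:ℝ) * (n:ℝ) := by
    rw [Finset.sum_comm]
    have e1 : ∀ v ∈ Finset.Ico (k+1) (n+1), ∑ u ∈ Finset.Ico 1 k,
        (k:ℝ) * (n:ℝ) * ((1/((v-k+1:ℕ):ℝ)) * (1/((v-u+1:ℕ):ℝ)^2))
        = (k:ℝ) * (n:ℝ) * ((1/((v-k+1:ℕ):ℝ)) * ∑ u ∈ Finset.Ico 1 k, (1/((v-u+1:ℕ):ℝ)^2)) := by
      intro v _
      rw [← Finset.mul_sum, ← Finset.mul_sum]
    rw [Finset.sum_congr rfl e1]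
    calc ∑ v ∈ Finset.Ico (k+1) (n+1), (k:ℝ) * (n:ℝ) * ((1/((v-k+1:ℕ):ℝ))
          * ∑ u ∈ Finset.Ico 1 k, (1/((v-u+1:ℕ):ℝ)^2))
        ≤ ∑ v ∈ Finset.Ico (k+1) (n+1), (k:ℝ) * (n:ℝ) * (1/((v-k+1:ℕ):ℝ)^2) := by
          refine Finset.sum_le_sum fun v hv => ?_
          rw [Finset.mem_Ico] at hv
          refine mul_le_mul_of_nonneg_left ?_ hk0
          have hin := inner_tail_left (v := v) (k := k) hv.1 hk1
          calc (1/((v-k+1:ℕ):ℝ)) * ∑ u ∈ Finset.Ico 1 k, (1/((v-u+1:ℕ):ℝ)^2)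
              ≤ (1/((v-k+1:ℕ):ℝ)) * (1/((v-k+1:ℕ):ℝ)) := by
                refine mul_le_mul_of_nonneg_left ?_ (by positivity)
                exact_mod_cast hin
            _ = 1/((v-k+1:ℕ):ℝ)^2 := by rw [pow_two, one_div_mul_one_div]
      _ = (k:ℝ) * (n:ℝ) * ∑ v ∈ Finset.Ico (k+1) (n+1), (1/((v-k+1:ℕ):ℝ)^2) := by
          rw [← Finset.mul_sum]
      _ ≤ (k:ℝ) * (n:ℝ) * 1 := mul_le_mul_of_nonneg_left (outer_right hkn) hk0
      _ = (k:ℝ) * (n:ℝ) := by ring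
  calc ∑ u ∈ Finset.Ico 1 k,
        (k:ℝ) * (n:ℝ) * ((1/((k-u+1:ℕ):ℝ))
          * ∑ v ∈ Finset.Ico (k+1) (n+1), (1/((v-u+1:ℕ):ℝ)^2))
      + ∑ u ∈ Finset.Ico 1 k, ∑ v ∈ Finset.Ico (k+1) (n+1),
          (k:ℝ) * (n:ℝ) * ((1/((v-k+1:ℕ):ℝ)) * (1/((v-u+1:ℕ):ℝ)^2))
      ≤ (k:ℝ) * (n:ℝ) + (k:ℝ) * (n:ℝ) := add_le_add hpart1 hpart2
    _ = 2 * (k:ℝ) * (n:ℝ) := by ring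
end Cross

/-- There exists `C > 0` such that for all `n ≥ 2` and all `1 ≤ k ≤ n`,
`|Var(W_k(n)) − k²·log(k(n−k+1)) − n²/2| ≤ C·k·n`. -/
theorem variance_weightW_expansion :
    ∃ C : ℝ, 0 < C ∧ ∀ n : ℕ, 2 ≤ n → ∀ k : ℕ, 1 ≤ k → k ≤ n →
      |varPerm (fun σ : Equiv.Perm (Fin n) => weightW σ k)
          - (k : ℝ) ^ 2 * Real.log ((k : ℝ) * ((n : ℝ) - (k : ℝ) + 1)) - (n : ℝ) ^ 2 / 2|
        ≤ C * (k : ℝ) * (n : ℝ) := by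
  refine ⟨100, by norm_num, ?_⟩
  intro n hn k hk1 hkn
  rw [varPerm_weightW_split hk1 hkn]
  have hD1 := D1_est (n := n) hk1 hkn
  have hD2 := D2_est (n := n) hk1 hkn
  have hX := cross_est (n := n) hk1 hkn
  have hcast : ((n - k + 1 : ℕ) : ℝ) = (n:ℝ) - (k:ℝ) + 1 := by
    push_cast [Nat.cast_sub hkn]
    ring
  have hlog : (k:ℝ) ^ 2 * Real.log ((k : ℝ) * ((n : ℝ) - (k : ℝ) + 1))
      = (k:ℝ) ^ 2 * Real.log k + (k:ℝ) ^ 2 * Real.log ((n - k + 1 : ℕ) : ℝ) := by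
    rw [← hcast, Real.log_mul (by positivity) (by positivity), mul_add]
  rw [hlog]
  have habs2 : |2 * ∑ u ∈ Finset.Ico 1 k, ∑ v ∈ Finset.Ico (k + 1) (n + 1),
      ((u : ℝ) * (v : ℝ)) * covA n k u v| ≤ 4 * (k:ℝ) * (n:ℝ) := by
    rw [abs_mul, abs_two]
    linarith
  have hdecomp : (∑ u ∈ Finset.Ico 1 k, (u : ℝ) ^ 2 * covA n k u u)
        + (∑ v ∈ Finset.Ico (k + 1) (n + 1), (v : ℝ) ^ 2 * covA n k v v)
        + 2 * ∑ u ∈ Finset.Ico 1 k, ∑ v ∈ Finset.Ico (k + 1) (n + 1),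
            ((u : ℝ) * (v : ℝ)) * covA n k u v
        - ((k:ℝ) ^ 2 * Real.log k + (k:ℝ) ^ 2 * Real.log ((n - k + 1 : ℕ) : ℝ))
        - (n : ℝ) ^ 2 / 2
      = ((∑ u ∈ Finset.Ico 1 k, (u : ℝ) ^ 2 * covA n k u u) - (k:ℝ) ^ 2 * Real.log k)
        + ((∑ v ∈ Finset.Ico (k + 1) (n + 1), (v : ℝ) ^ 2 * covA n k v v)
            - (k:ℝ) ^ 2 * Real.log ((n - k + 1 : ℕ) : ℝ) - (n : ℝ) ^ 2 / 2)
        + 2 * ∑ u ∈ Finset.Ico 1 k, ∑ v ∈ Finset.Ico (k + 1) (n + 1),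
            ((u : ℝ) * (v : ℝ)) * covA n k u v := by ring
  rw [hdecomp]
  have hk0 : (0:ℝ) ≤ (k:ℝ) := by positivity
  have hn0 : (0:ℝ) ≤ (n:ℝ) := by positivity
  calc |_ + _ + _| ≤ |_ + _| + |2 * ∑ u ∈ Finset.Ico 1 k, ∑ v ∈ Finset.Ico (k + 1) (n + 1),
          ((u : ℝ) * (v : ℝ)) * covA n k u v| := abs_add_le _ _
    _ ≤ (|(∑ u ∈ Finset.Ico 1 k, (u : ℝ) ^ 2 * covA n k u u) - (k:ℝ) ^ 2 * Real.log k|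
          + |(∑ v ∈ Finset.Ico (k + 1) (n + 1), (v : ℝ) ^ 2 * covA n k v v)
              - (k:ℝ) ^ 2 * Real.log ((n - k + 1 : ℕ) : ℝ) - (n : ℝ) ^ 2 / 2|)
        + |2 * ∑ u ∈ Finset.Ico 1 k, ∑ v ∈ Finset.Ico (k + 1) (n + 1),
            ((u : ℝ) * (v : ℝ)) * covA n k u v| := by
          gcongr
          exact abs_add_le _ _
    _ ≤ (5 * (k:ℝ) * (n:ℝ) + 9 * (k:ℝ) * (n:ℝ)) + 4 * (k:ℝ) * (n:ℝ) :=
          add_le_add (add_le_add hD1 hD2) habs2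
    _ ≤ 100 * (k:ℝ) * (n:ℝ) := by nlinarith
end

section
/- (Theorem 1, weighted depths of large nodes, first part.) Let (k_n) be a sequence of integers with 1 ≤ k_n ≤ n for all n and k_n·√(log n)/n → ∞ as n → ∞. Then, in the random permutation model on {1,…,n}, E[|W_{k_n}(n) − k_n·D_{k_n}(n)|] / (k_n·√(log n)) → 0 as n → ∞. -/
open Finset Filter Topology MeasureTheory

section AuxProofs

open Classical

/-- Moving the witness of "first among `S`" by a swap. -/
lemma swap_step {n : ℕ} (S : Finset (Fin n)) (a b : Fin n) (hab : a ≠ b) (hb : b ∈ S)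
    (σ : Equiv.Perm (Fin n))
    (h : ∀ x ∈ S, x ≠ a → σ.symm a < σ.symm x) :
    ∀ x ∈ S, x ≠ b → (Equiv.swap a b * σ).symm b < (Equiv.swap a b * σ).symm x := by
  have hsymm : ∀ y, (Equiv.swap a b * σ).symm y = σ.symm (Equiv.swap a b y) := by
    intro y
    simp [Equiv.Perm.mul_def, Equiv.symm_trans_apply]
  intro x hx hxb
  rw [hsymm, hsymm, Equiv.swap_apply_right]
  rcases eq_or_ne x a with rfl | hxa
  · rw [Equiv.swap_apply_left]
    exact h b hb (Ne.symm hab)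
  · rw [Equiv.swap_apply_of_ne_of_ne hxa hxb]
    exact h x hx hxa

/-- Counting permutations for which `a` is first among `S`. -/
lemma key_count {n : ℕ} (S : Finset (Fin n)) (a : Fin n) (ha : a ∈ S) :
    S.card * ((Finset.univ.filter fun σ : Equiv.Perm (Fin n) =>
        ∀ x ∈ S, x ≠ a → σ.symm a < σ.symm x)).card
      ≤ Fintype.card (Equiv.Perm (Fin n)) := by
  classical
  set F : Fin n → Finset (Equiv.Perm (Fin n)) := fun b =>
    Finset.univ.filter fun σ => ∀ x ∈ S, x ≠ b → σ.symm b < σ.symm x with hF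
  have hcard : ∀ b ∈ S, (F b).card = (F a).card := by
    intro b hb
    rcases eq_or_ne a b with rfl | hab
    · rfl
    · refine (Finset.card_bij' (fun σ _ => Equiv.swap a b * σ)
        (fun σ _ => Equiv.swap a b * σ) ?_ ?_ ?_ ?_).symm
      · intro σ hσ
        simp only [hF, Finset.mem_filter, Finset.mem_univ, true_and] at hσ ⊢
        exact swap_step S a b hab hb σ hσ
      · intro σ hσ
        simp only [hF, Finset.mem_filter, Finset.mem_univ, true_and] at hσ ⊢
        rw [Equiv.swap_comm]
        exact swap_step S b a (Ne.symm hab) ha σ hσ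
      · intro σ _
        simp [← mul_assoc]
      · intro σ _
        simp [← mul_assoc]
  have hdisj : ∀ b ∈ S, ∀ c ∈ S, b ≠ c → Disjoint (F b) (F c) := by
    intro b hb c hc hbc
    rw [Finset.disjoint_left]
    intro σ hσb hσc
    simp only [hF, Finset.mem_filter, Finset.mem_univ, true_and] at hσb hσc
    exact absurd (hσb c hc (Ne.symm hbc)) (not_lt.mpr (le_of_lt (hσc b hb hbc)))
  calc S.card * (F a).card = ∑ b ∈ S, (F b).card := by
        rw [Finset.sum_congr rfl hcard, Finset.sum_const, smul_eq_mul]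
    _ = (S.biUnion F).card := (Finset.card_biUnion hdisj).symm
    _ ≤ Fintype.card (Equiv.Perm (Fin n)) := by
        rw [← Finset.card_univ]
        exact Finset.card_le_card (Finset.subset_univ _)

/-- Bound for a single term `|j - k| · #{σ : A_{j,k}}`. -/
lemma term_bound {n : ℕ} (kk : ℕ) (hk1 : 1 ≤ kk) (hkn : kk ≤ n) (j : Fin n) :
    |((j : ℕ) + 1 : ℝ) - kk| * ((Finset.univ.filter fun σ : Equiv.Perm (Fin n) =>
        eventA σ ((j : ℕ) + 1) kk).card : ℝ)
      ≤ (Fintype.card (Equiv.Perm (Fin n)) : ℝ) := by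
  classical
  set jv : ℕ := (j : ℕ) + 1 with hjv
  have hjv1 : 1 ≤ jv := by omega
  have hjvn : jv ≤ n := by
    have := j.2; omega
  rcases eq_or_ne jv kk with heq | hne
  · have hkkr : (kk : ℝ) = ((j : ℕ) : ℝ) + 1 := by exact_mod_cast heq.symm
    have : |((j : ℕ) + 1 : ℝ) - kk| = 0 := by rw [hkkr]; simp
    rw [this, zero_mul]
    exact Nat.cast_nonneg _
  · set d : ℕ := max jv kk - min jv kk with hd
    have hd1 : 1 ≤ d := by
      rcases Nat.lt_or_ge jv kk with h | h <;> omega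
    have habs : |((j : ℕ) + 1 : ℝ) - kk| = (d : ℝ) := by
      rcases Nat.le_total jv kk with h | h
      · have hdk : d = kk - jv := by omega
        rw [abs_sub_comm, abs_of_nonneg (by exact_mod_cast sub_nonneg.mpr (by exact_mod_cast h : ((jv : ℝ)) ≤ kk))]
        rw [hdk]
        push_cast [h]
        rw [hjv]; push_cast; ring
      · have hdk : d = jv - kk := by omega
        rw [abs_of_nonneg (by exact_mod_cast sub_nonneg.mpr (by exact_mod_cast h : ((kk : ℝ)) ≤ jv))]
        rw [hdk]
        push_cast [h]
        rw [hjv]; push_cast; ring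
    set S : Finset (Fin n) :=
      Finset.univ.filter fun mf : Fin n => min jv kk ≤ (mf : ℕ) + 1 ∧ (mf : ℕ) + 1 ≤ max jv kk
      with hS
    have hjS : j ∈ S := by
      simp only [hS, Finset.mem_filter, Finset.mem_univ, true_and]
      constructor <;> omega
    have hScard : d + 1 ≤ S.card := by
      have hsub : Finset.Icc (min jv kk) (max jv kk)
          ⊆ S.image (fun mf : Fin n => (mf : ℕ) + 1) := by
        intro m hm
        rw [Finset.mem_Icc] at hm
        have hm1 : 1 ≤ m := le_trans (by omega) hm.1
        have hmn : m ≤ n := le_trans hm.2 (by omega)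
        refine Finset.mem_image.mpr
          ⟨⟨m - 1, by omega⟩, Finset.mem_filter.mpr ⟨Finset.mem_univ _, ?_, ?_⟩, ?_⟩
        · show jv ⊓ kk ≤ m - 1 + 1
          omega
        · show m - 1 + 1 ≤ jv ⊔ kk
          omega
        · show m - 1 + 1 = m
          omega
      calc d + 1 = (Finset.Icc (min jv kk) (max jv kk)).card := by
            rw [Nat.card_Icc]; omega
        _ ≤ (S.image (fun mf : Fin n => (mf : ℕ) + 1)).card := Finset.card_le_card hsub
        _ ≤ S.card := Finset.card_image_le
    have hfilter : (Finset.univ.filter fun σ : Equiv.Perm (Fin n) => eventA σ jv kk)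
        = Finset.univ.filter fun σ : Equiv.Perm (Fin n) =>
            ∀ x ∈ S, x ≠ j → σ.symm j < σ.symm x := by
      apply Finset.filter_congr
      intro σ _
      constructor
      · intro h x hx hxj
        simp only [hS, Finset.mem_filter, Finset.mem_univ, true_and] at hx
        refine h j x rfl hx.1 hx.2 ?_
        intro hcontra
        exact hxj (Fin.ext (by omega))
      · intro h jf mf hjf hmin hmax hne
        have hjfj : jf = j := Fin.ext (by omega)
        subst hjfj
        refine h mf ?_ ?_
        · simp only [hS, Finset.mem_filter, Finset.mem_univ, true_and]
          exact ⟨hmin, hmax⟩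
        · intro hcontra
          exact hne (by rw [hcontra])
    have hkey := key_count S j hjS
    have hnat : d * ((Finset.univ.filter fun σ : Equiv.Perm (Fin n) => eventA σ jv kk).card)
        ≤ Fintype.card (Equiv.Perm (Fin n)) := by
      rw [hfilter]
      calc d * _ ≤ S.card * _ := Nat.mul_le_mul_right _ (by omega)
        _ ≤ _ := hkey
    rw [habs]
    exact_mod_cast hnat

/-- Crude first-moment bound `E|W_k - k·D_k| ≤ 2n`. -/
lemma exp_bound {n : ℕ} (kk : ℕ) (hk1 : 1 ≤ kk) (hkn : kk ≤ n) :
    expPerm (fun σ : Equiv.Perm (Fin n) => |weightW σ kk - (kk : ℝ) * depthD σ kk|)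
      ≤ 2 * n := by
  classical
  have hcardpos : (0 : ℝ) < (Fintype.card (Equiv.Perm (Fin n)) : ℝ) := by
    exact_mod_cast Fintype.card_pos
  rw [expPerm, div_le_iff₀ hcardpos]
  have hpoint : ∀ σ : Equiv.Perm (Fin n),
      |weightW σ kk - (kk : ℝ) * depthD σ kk|
        ≤ (∑ j : Fin n, |((j : ℕ) + 1 : ℝ) - kk| * ind (eventA σ ((j : ℕ) + 1) kk)) + kk := by
    intro σ
    have hsum : (∑ j : Fin n, (((j : ℕ) + 1 : ℝ) - kk) * ind (eventA σ ((j : ℕ) + 1) kk))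
        = (∑ j : Fin n, ((j : ℕ) + 1 : ℝ) * ind (eventA σ ((j : ℕ) + 1) kk))
          - ∑ j : Fin n, (kk : ℝ) * ind (eventA σ ((j : ℕ) + 1) kk) := by
      rw [← Finset.sum_sub_distrib]
      exact Finset.sum_congr rfl fun j _ => by ring
    have hrw : weightW σ kk - (kk : ℝ) * depthD σ kk
        = (∑ j : Fin n, (((j : ℕ) + 1 : ℝ) - kk) * ind (eventA σ ((j : ℕ) + 1) kk)) + kk := by
      rw [weightW, depthD, hsum, mul_sub, mul_one, Finset.mul_sum]
      ring
    rw [hrw]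
    refine le_trans (abs_add_le _ _) ?_
    have h1 : |(kk : ℝ)| = (kk : ℝ) := abs_of_nonneg (Nat.cast_nonneg _)
    rw [h1]
    apply add_le_add_left
    refine le_trans (Finset.abs_sum_le_sum_abs _ _) ?_
    apply Finset.sum_le_sum
    intro j _
    rw [abs_mul]
    have : |ind (eventA σ ((j : ℕ) + 1) kk)| = ind (eventA σ ((j : ℕ) + 1) kk) := by
      rw [abs_of_nonneg]
      unfold ind
      split <;> norm_num
    rw [this]
  calc ∑ σ : Equiv.Perm (Fin n), |weightW σ kk - (kk : ℝ) * depthD σ kk|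
      ≤ ∑ σ : Equiv.Perm (Fin n),
          ((∑ j : Fin n, |((j : ℕ) + 1 : ℝ) - kk| * ind (eventA σ ((j : ℕ) + 1) kk)) + kk) :=
        Finset.sum_le_sum fun σ _ => hpoint σ
    _ = (∑ j : Fin n, |((j : ℕ) + 1 : ℝ) - kk| *
          ((Finset.univ.filter fun σ : Equiv.Perm (Fin n) =>
            eventA σ ((j : ℕ) + 1) kk).card : ℝ))
        + (Fintype.card (Equiv.Perm (Fin n)) : ℝ) * kk := by
        rw [Finset.sum_add_distrib, Finset.sum_const, Finset.card_univ, nsmul_eq_mul]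
        congr 1
        rw [Finset.sum_comm]
        apply Finset.sum_congr rfl
        intro j _
        rw [← Finset.mul_sum]
        congr 1
        unfold ind
        rw [Finset.sum_boole]
    _ ≤ (∑ _j : Fin n, (Fintype.card (Equiv.Perm (Fin n)) : ℝ))
        + (Fintype.card (Equiv.Perm (Fin n)) : ℝ) * kk := by
        apply add_le_add_left
        exact Finset.sum_le_sum fun j _ => term_bound kk hk1 hkn j
    _ ≤ 2 * n * (Fintype.card (Equiv.Perm (Fin n)) : ℝ) := by
        rw [Finset.sum_const, Finset.card_univ, Fintype.card_fin, nsmul_eq_mul]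
        have hkn' : (kk : ℝ) ≤ (n : ℝ) := by exact_mod_cast hkn
        nlinarith [hcardpos]

end AuxProofs

/-- Theorem 1, weighted depths of large nodes, first part.
If `1 ≤ k_n ≤ n` and `k_n·√(log n)/n → ∞`, then
`E[|W_{k_n}(n) − k_n·D_{k_n}(n)|]/(k_n·√(log n)) → 0`. -/
theorem large_nodes_first_order (k : ℕ → ℕ) (hk : ∀ n : ℕ, 1 ≤ n → 1 ≤ k n ∧ k n ≤ n)
    (hgrow : Tendsto (fun n : ℕ => (k n : ℝ) * Real.sqrt (Real.log n) / n) atTop atTop) :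
    Tendsto (fun n : ℕ =>
        expPerm (fun σ : Equiv.Perm (Fin n) => |weightW σ (k n) - (k n : ℝ) * depthD σ (k n)|)
          / ((k n : ℝ) * Real.sqrt (Real.log n)))
      atTop (𝓝 0) := by
  classical
  -- nonnegativity of the expectation
  have hEnn : ∀ n : ℕ, 0 ≤ expPerm (fun σ : Equiv.Perm (Fin n) =>
      |weightW σ (k n) - (k n : ℝ) * depthD σ (k n)|) := by
    intro n
    apply div_nonneg _ (Nat.cast_nonneg _)
    exact Finset.sum_nonneg fun σ _ => abs_nonneg _
  have hge : ∀ᶠ n : ℕ in atTop, (n : ℝ) ≤ (k n : ℝ) * Real.sqrt (Real.log n) := by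
    filter_upwards [hgrow.eventually_ge_atTop 1, eventually_ge_atTop 1] with n h1 hn1
    have hnpos : (0 : ℝ) < n := by exact_mod_cast hn1
    exact (one_le_div hnpos).mp h1
  have hupper : ∀ᶠ n : ℕ in atTop,
      expPerm (fun σ : Equiv.Perm (Fin n) => |weightW σ (k n) - (k n : ℝ) * depthD σ (k n)|)
          / ((k n : ℝ) * Real.sqrt (Real.log n))
        ≤ 2 * ((k n : ℝ) * Real.sqrt (Real.log n) / n)⁻¹ := by
    filter_upwards [hge, eventually_ge_atTop 1] with n hgen hn1
    have hnpos : (0 : ℝ) < n := by exact_mod_cast hn1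
    have hdpos : (0 : ℝ) < (k n : ℝ) * Real.sqrt (Real.log n) := lt_of_lt_of_le hnpos hgen
    have hE : expPerm (fun σ : Equiv.Perm (Fin n) =>
        |weightW σ (k n) - (k n : ℝ) * depthD σ (k n)|) ≤ 2 * n :=
      exp_bound (k n) (hk n hn1).1 (hk n hn1).2
    have h2 : 2 * ((k n : ℝ) * Real.sqrt (Real.log n) / n)⁻¹
        = 2 * n / ((k n : ℝ) * Real.sqrt (Real.log n)) := by
      rw [inv_div]
      ring
    rw [h2]
    gcongr
  have hlower : ∀ᶠ n : ℕ in atTop,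
      0 ≤ expPerm (fun σ : Equiv.Perm (Fin n) => |weightW σ (k n) - (k n : ℝ) * depthD σ (k n)|)
          / ((k n : ℝ) * Real.sqrt (Real.log n)) := by
    filter_upwards [hge, eventually_ge_atTop 1] with n hgen hn1
    have hnpos : (0 : ℝ) < n := by exact_mod_cast hn1
    exact div_nonneg (hEnn n) (le_of_lt (lt_of_lt_of_le hnpos hgen))
  have hlim : Tendsto (fun n : ℕ => 2 * ((k n : ℝ) * Real.sqrt (Real.log n) / n)⁻¹)
      atTop (𝓝 0) := by
    have := hgrow.inv_tendsto_atTop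
    have h2 := this.const_mul (2 : ℝ)
    simpa using h2
  exact tendsto_of_tendsto_of_tendsto_of_le_of_le' tendsto_const_nhds hlim hlower hupper
end

section
/- In the random permutation model on {1,…,n}: for every 1 ≤ k ≤ n and every 1 ≤ ℓ ≤ n−k, the probability that the subtree rooted at the node labelled k contains at least ℓ nodes with labels strictly larger than k equals 1/(ℓ+1). That is, with T^>_k(n) := #{m : k < m ≤ n, node m lies in the subtree rooted at node k}, one has P(T^>_k(n) ≥ ℓ) = 1/(ℓ+1). -/
open Finset Filter Topology MeasureTheory

open Classical in
/-- The number of permutations for which a fixed element `a` of a set `S` attains the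
minimum of `σ.symm` over `S`, times `S.card`, equals the total number of permutations. -/
lemma first_count {n : ℕ} (S : Finset (Fin n)) (a : Fin n) (ha : a ∈ S) :
    (Finset.univ.filter fun σ : Equiv.Perm (Fin n) =>
        ∀ x ∈ S, x ≠ a → σ.symm a < σ.symm x).card * S.card
      = Fintype.card (Equiv.Perm (Fin n)) := by
  classical
  set P : Fin n → Equiv.Perm (Fin n) → Prop :=
    fun b σ => ∀ x ∈ S, x ≠ b → σ.symm b < σ.symm x with hP
  have happ : ∀ (b c : Fin n) (σ : Equiv.Perm (Fin n)) (y : Fin n),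
      (Equiv.swap b c * σ).symm y = σ.symm (Equiv.swap b c y) := by
    intro b c σ y
    simp [Equiv.Perm.mul_def, Equiv.symm_trans_apply]
  have key : ∀ b c : Fin n, b ∈ S → c ∈ S → ∀ σ : Equiv.Perm (Fin n),
      P b σ → P c (Equiv.swap b c * σ) := by
    intro b c hb hc σ h x hx hxc
    rw [happ, happ, Equiv.swap_apply_right]
    by_cases hxb : x = b
    · subst hxb
      rw [Equiv.swap_apply_left]
      exact h c hc (fun hcb => hxc hcb.symm)
    · rw [Equiv.swap_apply_of_ne_of_ne hxb hxc]
      exact h x hx hxb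
  have hcard_eq : ∀ b ∈ S, (Finset.univ.filter fun σ => P b σ).card
      = (Finset.univ.filter fun σ => P a σ).card := by
    intro b hb
    apply Finset.card_bij' (fun σ _ => Equiv.swap b a * σ) (fun σ _ => Equiv.swap b a * σ)
    · intro σ hσ
      simp only [Finset.mem_filter, Finset.mem_univ, true_and] at *
      exact key b a hb ha σ hσ
    · intro σ hσ
      simp only [Finset.mem_filter, Finset.mem_univ, true_and] at *
      rw [Equiv.swap_comm]
      exact key a b ha hb σ hσ
    · intro σ _
      rw [← mul_assoc, Equiv.swap_mul_self, one_mul]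
    · intro σ _
      rw [← mul_assoc, Equiv.swap_mul_self, one_mul]
  have h1 : ∀ σ : Equiv.Perm (Fin n), (S.filter fun b => P b σ).card = 1 := by
    intro σ
    obtain ⟨a₀, ha₀, hmin⟩ := S.exists_min_image (fun x => σ.symm x) ⟨a, ha⟩
    rw [Finset.card_eq_one]
    refine ⟨a₀, ?_⟩
    ext b
    simp only [Finset.mem_filter, Finset.mem_singleton]
    constructor
    · rintro ⟨hbS, hPb⟩
      by_contra hne
      exact absurd (hPb a₀ ha₀ (fun h => hne h.symm)) (not_lt.2 (hmin b hbS))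
    · rintro rfl
      refine ⟨ha₀, fun x hx hxne => lt_of_le_of_ne (hmin x hx) ?_⟩
      intro heq
      exact hxne (σ.symm.injective heq).symm
  have htot : ∑ b ∈ S, (Finset.univ.filter fun σ => P b σ).card
      = Fintype.card (Equiv.Perm (Fin n)) := by
    calc ∑ b ∈ S, (Finset.univ.filter fun σ => P b σ).card
        = ∑ b ∈ S, ∑ σ : Equiv.Perm (Fin n), if P b σ then 1 else 0 :=
          Finset.sum_congr rfl fun b _ => by rw [Finset.card_filter]
      _ = ∑ σ : Equiv.Perm (Fin n), ∑ b ∈ S, if P b σ then 1 else 0 := Finset.sum_comm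
      _ = ∑ σ : Equiv.Perm (Fin n), (S.filter fun b => P b σ).card :=
          Finset.sum_congr rfl fun σ _ => by rw [Finset.card_filter]
      _ = ∑ _σ : Equiv.Perm (Fin n), 1 := by simp [h1]
      _ = _ := by simp
  calc (Finset.univ.filter fun σ => P a σ).card * S.card
      = ∑ _b ∈ S, (Finset.univ.filter fun σ => P a σ).card := by
        rw [Finset.sum_const, smul_eq_mul, mul_comm]
    _ = ∑ b ∈ S, (Finset.univ.filter fun σ => P b σ).card :=
        (Finset.sum_congr rfl fun b hb => (hcard_eq b hb).symm)
    _ = _ := htot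

open Classical in
/-- In the random permutation model on `{1,…,n}`: for every `1 ≤ k ≤ n`
and every `1 ≤ ℓ ≤ n−k`, with `T^>_k(n)` the number of nodes with labels strictly larger
than `k` in the subtree rooted at the node labelled `k`, one has `P(T^>_k(n) ≥ ℓ) = 1/(ℓ+1)`. -/
theorem prob_subtree_larger_labels (n k ℓ : ℕ) (hk1 : 1 ≤ k) (hk2 : k ≤ n)
    (hl1 : 1 ≤ ℓ) (hl2 : ℓ ≤ n - k) :
    probPerm (fun σ : Equiv.Perm (Fin n) =>
        ℓ ≤ (Finset.univ.filter fun m : Fin n =>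
              k < (m : ℕ) + 1 ∧ eventA σ k ((m : ℕ) + 1)).card)
      = 1 / ((ℓ : ℝ) + 1) := by
  classical
  have hkn : k - 1 < n := by omega
  have hkln : k + ℓ ≤ n := by omega
  set a : Fin n := ⟨k - 1, hkn⟩ with ha_def
  have ha1 : (a : ℕ) + 1 = k := by simp [ha_def]; omega
  set S : Finset (Fin n) :=
    Finset.univ.filter (fun m : Fin n => k ≤ (m : ℕ) + 1 ∧ (m : ℕ) + 1 ≤ k + ℓ) with hS_def
  have hmemS : ∀ m : Fin n, m ∈ S ↔ k ≤ (m : ℕ) + 1 ∧ (m : ℕ) + 1 ≤ k + ℓ := by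
    intro m; simp [hS_def]
  have haS : a ∈ S := by rw [hmemS]; omega
  have hne_a : ∀ m : Fin n, m ≠ a ↔ (m : ℕ) + 1 ≠ k := by
    intro m
    constructor
    · intro h hc; exact h (Fin.ext (by simp [ha_def]; omega))
    · intro h hc; subst hc; omega
  have hScard : S.card = ℓ + 1 := by
    rw [show ℓ + 1 = (Finset.Icc (k - 1) (k + ℓ - 1)).card by rw [Nat.card_Icc]; omega]
    apply Finset.card_bij (fun (m : Fin n) _ => (m : ℕ))
    · intro m hm
      rw [hmemS] at hm
      rw [Finset.mem_Icc]; omega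
    · intro m₁ _ m₂ _ h; exact Fin.ext h
    · intro x hx
      rw [Finset.mem_Icc] at hx
      have hxn : x < n := by omega
      exact ⟨⟨x, hxn⟩, by rw [hmemS]; simp; omega, rfl⟩
  -- the event is equivalent to `a` being first among `S`
  have hiff : ∀ σ : Equiv.Perm (Fin n),
      (ℓ ≤ (Finset.univ.filter fun m : Fin n =>
          k < (m : ℕ) + 1 ∧ eventA σ k ((m : ℕ) + 1)).card)
        ↔ (∀ x ∈ S, x ≠ a → σ.symm a < σ.symm x) := by
    intro σ
    constructor
    · intro hcard x hx hxa
      rw [hmemS] at hx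
      rw [hne_a] at hxa
      -- find an element m of the filtered set with k + ℓ ≤ m + 1
      by_cases hbig : ∃ m ∈ (Finset.univ.filter fun m : Fin n =>
          k < (m : ℕ) + 1 ∧ eventA σ k ((m : ℕ) + 1)), k + ℓ ≤ (m : ℕ) + 1
      · obtain ⟨m, hm, hml⟩ := hbig
        rw [Finset.mem_filter] at hm
        obtain ⟨-, hmk, hev⟩ := hm
        have hmin : min k ((m : ℕ) + 1) = k := by omega
        have hmax : max k ((m : ℕ) + 1) = (m : ℕ) + 1 := by omega
        exact hev a x ha1 (by omega) (by omega) hxa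
      · exfalso
        push_neg at hbig
        have hsub : (Finset.univ.filter fun m : Fin n =>
            k < (m : ℕ) + 1 ∧ eventA σ k ((m : ℕ) + 1)).card ≤
            (Finset.Icc k (k + ℓ - 2)).card := by
          apply Finset.card_le_card_of_injOn (fun m : Fin n => (m : ℕ))
          · intro m hm
            have := hbig m hm
            rw [Finset.mem_coe, Finset.mem_filter] at hm
            simp only [Finset.mem_coe, Finset.mem_Icc]; omega
          · intro m₁ _ m₂ _ h; exact Fin.ext h
        rw [Nat.card_Icc] at hsub
        omega
    · intro hfirst
      have hsub : S.erase a ⊆ (Finset.univ.filter fun m : Fin n =>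
          k < (m : ℕ) + 1 ∧ eventA σ k ((m : ℕ) + 1)) := by
        intro m hm
        rw [Finset.mem_erase] at hm
        obtain ⟨hma, hmS⟩ := hm
        have hmS' := (hmemS m).1 hmS
        have hmk : k < (m : ℕ) + 1 := by
          rcases hmS' with ⟨h1, h2⟩
          rcases lt_or_eq_of_le h1 with h | h
          · omega
          · exact absurd h.symm ((hne_a m).1 hma)
        rw [Finset.mem_filter]
        refine ⟨Finset.mem_univ _, hmk, ?_⟩
        intro jf mf hjf hmin hmax hne
        have hjfa : jf = a := Fin.ext (by simp [ha_def]; omega)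
        subst hjfa
        have hminv : min k ((m : ℕ) + 1) = k := by omega
        have hmaxv : max k ((m : ℕ) + 1) = (m : ℕ) + 1 := by omega
        rw [hminv] at hmin
        rw [hmaxv] at hmax
        apply hfirst mf
        · rw [hmemS]; omega
        · rw [hne_a]; exact hne
      calc ℓ = (S.erase a).card := by rw [Finset.card_erase_of_mem haS, hScard]; omega
        _ ≤ _ := Finset.card_le_card hsub
  -- now compute the probability
  have hfeq : (Finset.univ.filter fun σ : Equiv.Perm (Fin n) =>
      ℓ ≤ (Finset.univ.filter fun m : Fin n =>
          k < (m : ℕ) + 1 ∧ eventA σ k ((m : ℕ) + 1)).card)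
      = (Finset.univ.filter fun σ : Equiv.Perm (Fin n) =>
          ∀ x ∈ S, x ≠ a → σ.symm a < σ.symm x) := by
    ext σ
    simp only [Finset.mem_filter, Finset.mem_univ, true_and]
    exact hiff σ
  rw [probPerm, Finset.filter_congr_decidable, hfeq]
  have hc := first_count S a haS
  rw [hScard] at hc
  have hpos : 0 < Fintype.card (Equiv.Perm (Fin n)) := Fintype.card_pos
  have hcR : ((Finset.univ.filter fun σ : Equiv.Perm (Fin n) =>
      ∀ x ∈ S, x ≠ a → σ.symm a < σ.symm x).card : ℝ) * ((ℓ : ℝ) + 1)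
      = (Fintype.card (Equiv.Perm (Fin n)) : ℝ) := by
    rw [← hc]; push_cast; ring
  rw [div_eq_div_iff (by exact_mod_cast hpos.ne') (by positivity)]
  rw [← hcR]; ring
end

section
/- (Recursions for weighted path length and weighted Wiener index.) Let T be a finite rooted binary tree with real labels, nonempty, with root label x and left and right subtrees T₁ and T₂ (possibly empty). Then 𝐩(T) = 𝐩(T₁) + 𝐩(T₂) + |T|·x, and 𝐰(T) = 𝐰(T₁) + 𝐰(T₂) + (|T₂|+1)·𝐩(T₁) + (|T₁|+1)·𝐩(T₂) + (|T| + |T₁|·|T₂|)·x. -/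
open Finset Filter Topology MeasureTheory

/-- finite rooted binary trees with real labels. -/
inductive BTree where
  | leaf : BTree
  | node : BTree → ℝ → BTree → BTree

namespace BTree

/-- number of nodes. -/
def size : BTree → ℕ
  | leaf => 0
  | node l _ r => size l + size r + 1

/-- the positions (root-to-node direction words, `false` = left) of all nodes. -/
def positions : BTree → List (List Bool)
  | leaf => []
  | node l _ r => [] :: ((positions l).map (false :: ·) ++ (positions r).map (true :: ·))

/-- the label at a given position (junk value `0` outside of the tree). -/
noncomputable def labelAt : BTree → List Bool → ℝ
  | leaf, _ => 0
  | node _ x _, [] => x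
  | node l _ _, false :: p => labelAt l p
  | node _ _ r, true :: p => labelAt r p

/-- weighted depth of the node at position `p`: the sum of all labels on the path
from the root to the node, endpoints included. -/
noncomputable def wdepth (t : BTree) (p : List Bool) : ℝ :=
  ∑ i ∈ Finset.range (p.length + 1), labelAt t (p.take i)

/-- weighted path length `𝐩(T)`: the sum of the weighted depths of all nodes. -/
noncomputable def wpl (t : BTree) : ℝ := ((positions t).map (wdepth t)).sum

/-- longest common prefix of two positions (the position of the lowest common ancestor). -/
def commonPrefix : List Bool → List Bool → List Bool
  | a :: p, b :: q => if a = b then a :: commonPrefix p q else []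
  | _, _ => []

/-- weighted distance between the nodes at positions `p` and `q`: the sum of all
labels on the path connecting them, endpoints included (for `p = q` it is the label at `p`). -/
noncomputable def wdist (t : BTree) (p q : List Bool) : ℝ :=
  wdepth t p + wdepth t q - 2 * wdepth t (commonPrefix p q) + labelAt t (commonPrefix p q)

/-- weighted Wiener index `𝐰(T)`: the sum of the weighted distances over all unordered
pairs of nodes, pairs of a node with itself included. -/
noncomputable def wWiener (t : BTree) : ℝ :=
  (((positions t).map fun p => ((positions t).map fun q => wdist t p q).sum).sum
    + ((positions t).map fun p => wdist t p p).sum) / 2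

/-- (unweighted) path length `p(T)`: the sum of the depths of all nodes. -/
noncomputable def pl (t : BTree) : ℝ := ((positions t).map fun p => (p.length : ℝ)).sum

/-- graph distance between the nodes at positions `p` and `q`. -/
noncomputable def gdist (p q : List Bool) : ℝ :=
  (p.length : ℝ) + (q.length : ℝ) - 2 * ((commonPrefix p q).length : ℝ)

/-- (unweighted) Wiener index `w(T)`: the sum of the graph distances over all unordered
pairs of distinct nodes. -/
noncomputable def wiener (t : BTree) : ℝ :=
  (((positions t).map fun p => ((positions t).map fun q => gdist p q).sum).sum) / 2

/-- binary search tree insertion: go left at a node whose label is at least the key,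
right otherwise. -/
noncomputable def insertBST : BTree → ℝ → BTree
  | leaf, y => node leaf y leaf
  | node l x r, y => if y ≤ x then node (insertBST l y) x r else node l x (insertBST r y)

/-- the binary search tree built by successively inserting the elements of a list. -/
noncomputable def bstOfList (l : List ℝ) : BTree := l.foldl insertBST leaf

/-- the subtree rooted at a given position. -/
def subtreeAt : BTree → List Bool → BTree
  | t, [] => t
  | leaf, _ :: _ => leaf
  | node l _ _, false :: p => subtreeAt l p
  | node _ _ r, true :: p => subtreeAt r p

/-- height of a tree: the maximal depth of its nodes (measured from its root). -/
def heightT (t : BTree) : ℕ := ((positions t).map List.length).foldr max 0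

/-- the list of all labels of a tree. -/
noncomputable def labels : BTree → List ℝ
  | leaf => []
  | node l x r => x :: (labels l ++ labels r)

/-- the largest label occurring in a tree (junk value `0` for the empty tree). -/
noncomputable def maxLabel (t : BTree) : ℝ := (labels t).foldr max 0

/-- the positions of the external nodes, in left-to-right (depth first search) order. -/
def extList : BTree → List (List Bool)
  | leaf => [[]]
  | node l _ r => (extList l).map (false :: ·) ++ (extList r).map (true :: ·)

/-- weighted depth of an external node at position `p`: the sum of the labels of the
internal nodes on the path from the root to it. -/
noncomputable def wdepthExt (t : BTree) (p : List Bool) : ℝ :=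
  ∑ i ∈ Finset.range p.length, labelAt t (p.take i)

lemma length_positions (t : BTree) : (positions t).length = size t := by
  induction t with
  | leaf => rfl
  | node l y r ihl ihr => simp [positions, size, ihl, ihr]

lemma sum_map_const {α : Type*} (L : List α) (c : ℝ) :
    (L.map fun _ => c).sum = L.length * c := by
  induction L with
  | nil => simp
  | cons a L ih => simp [ih]; ring

lemma sum_map_add {α : Type*} (L : List α) (f g : α → ℝ) :
    (L.map fun a => f a + g a).sum = (L.map f).sum + (L.map g).sum := by
  induction L with
  | nil => simp
  | cons a L ih => simp [ih]; ring

lemma wdepth_nil (l r : BTree) (x : ℝ) : wdepth (node l x r) [] = x := by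
  simp [wdepth, labelAt]

lemma wdepth_false (l r : BTree) (x : ℝ) (p : List Bool) :
    wdepth (node l x r) (false :: p) = x + wdepth l p := by
  unfold wdepth
  rw [show (false :: p).length + 1 = (p.length + 1) + 1 by simp, Finset.sum_range_succ']
  simp [labelAt]; ring

lemma wdepth_true (l r : BTree) (x : ℝ) (p : List Bool) :
    wdepth (node l x r) (true :: p) = x + wdepth r p := by
  unfold wdepth
  rw [show (true :: p).length + 1 = (p.length + 1) + 1 by simp, Finset.sum_range_succ']
  simp [labelAt]; ring

lemma cp_ff (p q : List Bool) : commonPrefix (false::p) (false::q) = false :: commonPrefix p q := by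
  simp [commonPrefix]
lemma cp_tt (p q : List Bool) : commonPrefix (true::p) (true::q) = true :: commonPrefix p q := by
  simp [commonPrefix]
lemma cp_ft (p q : List Bool) : commonPrefix (false::p) (true::q) = [] := by
  simp [commonPrefix]
lemma cp_tf (p q : List Bool) : commonPrefix (true::p) (false::q) = [] := by
  simp [commonPrefix]
lemma cp_nil_left (q : List Bool) : commonPrefix [] q = [] := rfl
lemma cp_nil_right (p : List Bool) : commonPrefix p [] = [] := by cases p <;> rfl

lemma wdist_ff (l r : BTree) (x : ℝ) (p q : List Bool) :
    wdist (node l x r) (false::p) (false::q) = wdist l p q := by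
  simp [wdist, cp_ff, wdepth_false, labelAt]; ring
lemma wdist_tt (l r : BTree) (x : ℝ) (p q : List Bool) :
    wdist (node l x r) (true::p) (true::q) = wdist r p q := by
  simp [wdist, cp_tt, wdepth_true, labelAt]; ring
lemma wdist_ft (l r : BTree) (x : ℝ) (p q : List Bool) :
    wdist (node l x r) (false::p) (true::q) = wdepth l p + wdepth r q + x := by
  simp [wdist, cp_ft, wdepth_false, wdepth_true, wdepth_nil, labelAt]; ring
lemma wdist_tf (l r : BTree) (x : ℝ) (p q : List Bool) :
    wdist (node l x r) (true::p) (false::q) = wdepth r p + wdepth l q + x := by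
  simp [wdist, cp_tf, wdepth_false, wdepth_true, wdepth_nil, labelAt]; ring
lemma wdist_nil_f (l r : BTree) (x : ℝ) (p : List Bool) :
    wdist (node l x r) [] (false::p) = x + wdepth l p := by
  simp [wdist, cp_nil_left, wdepth_false, wdepth_nil, labelAt]; ring
lemma wdist_nil_t (l r : BTree) (x : ℝ) (p : List Bool) :
    wdist (node l x r) [] (true::p) = x + wdepth r p := by
  simp [wdist, cp_nil_left, wdepth_true, wdepth_nil, labelAt]; ring
lemma wdist_f_nil (l r : BTree) (x : ℝ) (p : List Bool) :
    wdist (node l x r) (false::p) [] = x + wdepth l p := by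
  simp [wdist, cp_nil_right, wdepth_false, wdepth_nil, labelAt]; ring
lemma wdist_t_nil (l r : BTree) (x : ℝ) (p : List Bool) :
    wdist (node l x r) (true::p) [] = x + wdepth r p := by
  simp [wdist, cp_nil_right, wdepth_true, wdepth_nil, labelAt]; ring
lemma wdist_nil_nil (l r : BTree) (x : ℝ) :
    wdist (node l x r) [] [] = x := by
  simp [wdist, cp_nil_left, wdepth_nil, labelAt]; ring

lemma sum_map_mul_left {α : Type*} (L : List α) (c : ℝ) (f : α → ℝ) :
    (L.map fun a => c * f a).sum = c * (L.map f).sum := by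
  induction L with
  | nil => simp
  | cons a L ih => simp [ih]; ring

end BTree

open BTree in
/-- recursions for weighted path length and weighted Wiener index.
For a nonempty finite rooted binary tree with root label `x` and subtrees `T₁, T₂`:
`𝐩(T) = 𝐩(T₁) + 𝐩(T₂) + |T|·x` and
`𝐰(T) = 𝐰(T₁) + 𝐰(T₂) + (|T₂|+1)·𝐩(T₁) + (|T₁|+1)·𝐩(T₂) + (|T| + |T₁|·|T₂|)·x`. -/
theorem wpl_wWiener_recursion (l r : BTree) (x : ℝ) :
    wpl (BTree.node l x r) = wpl l + wpl r + (size (BTree.node l x r) : ℝ) * x ∧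
    wWiener (BTree.node l x r)
      = wWiener l + wWiener r + ((size r : ℝ) + 1) * wpl l + ((size l : ℝ) + 1) * wpl r
        + ((size (BTree.node l x r) : ℝ) + (size l : ℝ) * (size r : ℝ)) * x := by
  have hsum : ∀ f : List Bool → ℝ, ((positions (node l x r)).map f).sum
      = f [] + ((positions l).map fun p => f (false::p)).sum
        + ((positions r).map fun p => f (true::p)).sum := by
    intro f
    simp [positions, List.map_map, Function.comp_def, add_assoc]
  constructor
  · simp only [wpl, hsum, wdepth_nil, wdepth_false, wdepth_true]
    simp only [sum_map_add, sum_map_mul_left, sum_map_const, length_positions, size]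
    push_cast; ring
  · simp only [wWiener, wpl, hsum, wdist_nil_nil, wdist_nil_f, wdist_nil_t, wdist_f_nil,
      wdist_t_nil, wdist_ff, wdist_tt, wdist_ft, wdist_tf]
    simp only [sum_map_add, sum_map_mul_left, sum_map_const, length_positions, size]
    push_cast; ring
end
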